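/- arXiv:1609.07558 — 8 statements merged into one kernel-verified Lean document; each statement's English description precedes it below -/
import Mathlib

section
/- Let X∞ ≥ 0 satisfy X∞ = A(1+X∞) in distribution with A = exp(σ√τ Z + (m-σ²/2)τ) independent of X∞, Z standard normal. Then for every n ∈ ℕ, E[X∞^{-n}] = exp(σ²τ n(n+1)/2 - n m τ) · E[(1+X∞)^{-n}] ≤ exp(σ²τ n(n+1)/2 - n m τ). In particular all negative integer moments of X∞ are finite. -/
open MeasureTheory ProbabilityTheory Real
open scoped ENNReal NNReal

lemma gauss_key (c : ℝ) (x : ℝ) :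
    gaussianPDFReal 0 1 x * Real.exp (c * x)
      = Real.exp (c ^ 2 / 2) * gaussianPDFReal c 1 x := by
  simp only [gaussianPDFReal, NNReal.coe_one, mul_one, sub_zero]
  rw [mul_assoc, mul_comm (Real.exp (c^2/2)), mul_assoc, ← Real.exp_add, ← Real.exp_add]
  ring_nf

lemma gauss_pdf_int (c : ℝ) :
    Integrable (fun x => gaussianPDFReal 0 1 x * Real.exp (c * x)) volume ∧
      ∫ x, gaussianPDFReal 0 1 x * Real.exp (c * x) = Real.exp (c ^ 2 / 2) := by
  have h : (fun x => gaussianPDFReal 0 1 x * Real.exp (c * x))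
      = fun x => Real.exp (c ^ 2 / 2) * gaussianPDFReal c 1 x := funext (gauss_key c)
  rw [h]
  refine ⟨(integrable_gaussianPDFReal c 1).const_mul _, ?_⟩
  rw [integral_const_mul, integral_gaussianPDFReal_eq_one c one_ne_zero, mul_one]

lemma gauss_exp (c : ℝ) :
    Integrable (fun x => Real.exp (c * x)) (gaussianReal 0 1) ∧
      ∫ x, Real.exp (c * x) ∂(gaussianReal 0 1) = Real.exp (c ^ 2 / 2) := by
  rw [gaussianReal_of_var_ne_zero 0 one_ne_zero]
  have hmeas := measurable_gaussianPDF 0 1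
  have hfin : ∀ᵐ x ∂(volume : Measure ℝ), gaussianPDF 0 1 x < ⊤ :=
    Filter.Eventually.of_forall fun x => ENNReal.ofReal_lt_top
  constructor
  · rw [integrable_withDensity_iff hmeas hfin]
    have : (fun x => Real.exp (c * x) * (gaussianPDF 0 1 x).toReal)
        = fun x => gaussianPDFReal 0 1 x * Real.exp (c * x) := by
      funext x
      rw [gaussianPDF, ENNReal.toReal_ofReal (gaussianPDFReal_nonneg 0 1 x), mul_comm]
    rw [this]
    exact (gauss_pdf_int c).1
  · have hd : (gaussianPDF 0 1) = fun x => ((gaussianPDFReal 0 1 x).toNNReal : ℝ≥0∞) := rfl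
    rw [hd, integral_withDensity_eq_integral_smul
      ((measurable_gaussianPDFReal 0 1).real_toNNReal) (fun x => Real.exp (c * x))]
    have : (fun x => (gaussianPDFReal 0 1 x).toNNReal • Real.exp (c * x))
        = fun x => gaussianPDFReal 0 1 x * Real.exp (c * x) := by
      funext x
      rw [NNReal.smul_def, smul_eq_mul, Real.coe_toNNReal _ (gaussianPDFReal_nonneg 0 1 x)]
    rw [this]
    exact (gauss_pdf_int c).2

/-- Negative integer moments of the stationary solution `X∞ = A(1+X∞)`:
`E[X∞^{-n}] = exp(σ²τ n(n+1)/2 - nmτ) E[(1+X∞)^{-n}] ≤ exp(σ²τ n(n+1)/2 - nmτ)`,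
and in particular all negative integer moments are finite. -/
theorem stmt3 {Ω : Type*} [MeasureSpace Ω] [IsProbabilityMeasure (ℙ : Measure Ω)]
    (σ τ m : ℝ) (hσ : 0 < σ) (hτ : 0 < τ) (hm : m < σ ^ 2 / 2)
    (Z : Ω → ℝ) (hZ : Measure.map Z ℙ = gaussianReal 0 1)
    (A X : Ω → ℝ)
    (hA : ∀ ω, A ω = Real.exp (σ * Real.sqrt τ * Z ω + (m - σ ^ 2 / 2) * τ))
    (hXpos : ∀ ω, 0 ≤ X ω) (hXmeas : Measurable X)
    (hindep : IndepFun A X ℙ)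
    (hfix : Measure.map X ℙ = Measure.map (fun ω => A ω * (1 + X ω)) ℙ) :
    ∀ n : ℕ,
      Integrable (fun ω => X ω ^ (-(n : ℝ))) ℙ ∧
      𝔼[fun ω => X ω ^ (-(n : ℝ))]
        = Real.exp (σ ^ 2 * τ * n * (n + 1) / 2 - n * m * τ)
          * 𝔼[fun ω => (1 + X ω) ^ (-(n : ℝ))] ∧
      𝔼[fun ω => X ω ^ (-(n : ℝ))]
        ≤ Real.exp (σ ^ 2 * τ * n * (n + 1) / 2 - n * m * τ) := by
  intro n
  have hZae : AEMeasurable Z ℙ := by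
    by_contra h
    rw [Measure.map_of_not_aemeasurable h] at hZ
    have h0 : (gaussianReal 0 1) Set.univ = 0 := by rw [← hZ]; simp
    simp [measure_univ] at h0
  set c : ℝ := -(n : ℝ) * (σ * Real.sqrt τ) with hc
  set d : ℝ := -(n : ℝ) * ((m - σ ^ 2 / 2) * τ) with hd
  set G : Ω → ℝ := fun ω => Real.exp (c * Z ω + d) with hG
  set E : ℝ := Real.exp (σ ^ 2 * τ * n * (n + 1) / 2 - n * m * τ) with hE
  -- A^{-n} = G pointwise
  have hAG : ∀ ω, A ω ^ (-(n : ℝ)) = G ω := by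
    intro ω
    rw [hA ω, Real.rpow_def_of_pos (Real.exp_pos _), Real.log_exp]
    congr 1
    rw [hc, hd]; ring
  -- measurability
  have hφ : Measurable fun x : ℝ => x ^ (-(n : ℝ)) := by fun_prop
  have hψ : Measurable fun x : ℝ => (1 + x) ^ (-(n : ℝ)) := by fun_prop
  have hGae : AEMeasurable G ℙ :=
    Real.measurable_exp.comp_aemeasurable ((hZae.const_mul c).add_const d)
  have hAae : AEMeasurable A ℙ := by
    have hfa : A = fun ω => Real.exp (σ * Real.sqrt τ * Z ω + (m - σ ^ 2 / 2) * τ) := funext hA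
    rw [hfa]
    exact Real.measurable_exp.comp_aemeasurable
      ((hZae.const_mul _).add_const _)
  have hYae : AEMeasurable (fun ω => A ω * (1 + X ω)) ℙ :=
    hAae.mul (measurable_const.add hXmeas).aemeasurable
  -- value and integrability of G
  have hcd : c ^ 2 / 2 + d = σ ^ 2 * τ * n * (n + 1) / 2 - n * m * τ := by
    have hsq : Real.sqrt τ ^ 2 = τ := Real.sq_sqrt hτ.le
    have h2 : c ^ 2 = (n : ℝ) ^ 2 * (σ ^ 2 * Real.sqrt τ ^ 2) := by rw [hc]; ring
    rw [h2, hsq, hd]; ring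
  have hgint : Integrable (fun x => Real.exp (c * x + d)) (Measure.map Z ℙ) := by
    rw [hZ]
    have : (fun x => Real.exp (c * x + d)) = fun x => Real.exp (c * x) * Real.exp d := by
      funext x; rw [← Real.exp_add]
    rw [this]
    exact (gauss_exp c).1.mul_const _
  have hGint : Integrable G ℙ :=
    (integrable_map_measure (Real.measurable_exp.comp
      ((measurable_id.const_mul c).add_const d)).aestronglyMeasurable hZae).mp hgint
  have hGval : ∫ ω, G ω ∂ℙ = E := by
    have h1 : ∫ ω, G ω ∂ℙ = ∫ x, Real.exp (c * x + d) ∂(Measure.map Z ℙ) :=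
      (integral_map hZae (Real.measurable_exp.comp
        ((measurable_id.const_mul c).add_const d)).aestronglyMeasurable).symm
    rw [h1, hZ]
    have h2 : (fun x => Real.exp (c * x + d)) = fun x => Real.exp (c * x) * Real.exp d := by
      funext x; rw [← Real.exp_add]
    rw [h2, integral_mul_const, (gauss_exp c).2, ← Real.exp_add, hcd]
  -- product decomposition
  have hprod : ((fun x : ℝ => x ^ (-(n : ℝ))) ∘ fun ω => A ω * (1 + X ω))
      = fun ω => G ω * (1 + X ω) ^ (-(n : ℝ)) := by
    funext ω
    have h0 : 0 ≤ A ω := by rw [hA ω]; exact (Real.exp_pos _).le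
    show (A ω * (1 + X ω)) ^ (-(n : ℝ)) = _
    rw [Real.mul_rpow h0 (by linarith [hXpos ω]), hAG ω]
  -- bounds on (1+X)^{-n}
  have hψ0 : ∀ ω, 0 ≤ (1 + X ω) ^ (-(n : ℝ)) :=
    fun ω => Real.rpow_nonneg (by linarith [hXpos ω]) _
  have hψ1 : ∀ ω, (1 + X ω) ^ (-(n : ℝ)) ≤ 1 := fun ω =>
    Real.rpow_le_one_of_one_le_of_nonpos (by linarith [hXpos ω])
      (neg_nonpos.mpr (Nat.cast_nonneg n))
  have hψXaesm : AEStronglyMeasurable (fun ω => (1 + X ω) ^ (-(n : ℝ))) ℙ :=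
    (hψ.comp hXmeas).aestronglyMeasurable
  -- integrability of the product
  have hPint : Integrable (fun ω => G ω * (1 + X ω) ^ (-(n : ℝ))) ℙ := by
    refine hGint.mono' (hGae.aestronglyMeasurable.mul hψXaesm) ?_
    refine Filter.Eventually.of_forall fun ω => ?_
    rw [Real.norm_eq_abs, abs_of_nonneg (mul_nonneg (Real.exp_pos _).le (hψ0 ω))]
    calc G ω * (1 + X ω) ^ (-(n : ℝ)) ≤ G ω * 1 :=
          mul_le_mul_of_nonneg_left (hψ1 ω) (Real.exp_pos _).le
      _ = G ω := mul_one _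
  -- integrability of X^{-n}
  have hXint : Integrable (fun ω => X ω ^ (-(n : ℝ))) ℙ := by
    have h1 : Integrable (fun x : ℝ => x ^ (-(n : ℝ))) (Measure.map X ℙ) := by
      rw [hfix, integrable_map_measure hφ.aestronglyMeasurable hYae, hprod]
      exact hPint
    exact (integrable_map_measure hφ.aestronglyMeasurable hXmeas.aemeasurable).mp h1
  -- the equality
  have heq : 𝔼[fun ω => X ω ^ (-(n : ℝ))]
      = E * 𝔼[fun ω => (1 + X ω) ^ (-(n : ℝ))] := by
    have h1 : 𝔼[fun ω => X ω ^ (-(n : ℝ))]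
        = ∫ x, x ^ (-(n : ℝ)) ∂(Measure.map X ℙ) :=
      (integral_map hXmeas.aemeasurable hφ.aestronglyMeasurable).symm
    rw [h1, hfix, integral_map hYae hφ.aestronglyMeasurable]
    have h2 : ∫ ω, (A ω * (1 + X ω)) ^ (-(n : ℝ)) ∂ℙ
        = ∫ ω, G ω * (1 + X ω) ^ (-(n : ℝ)) ∂ℙ := by
      apply integral_congr_ae
      exact Filter.Eventually.of_forall fun ω => congrFun hprod ω
    rw [h2]
    have hind2 : IndepFun (fun ω => A ω ^ (-(n : ℝ))) (fun ω => (1 + X ω) ^ (-(n : ℝ))) ℙ :=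
      hindep.comp hφ hψ
    have hAGfun : (fun ω => A ω ^ (-(n : ℝ))) = G := funext hAG
    rw [hAGfun] at hind2
    have := hind2.integral_mul_eq_mul_integral hGae.aestronglyMeasurable hψXaesm
    have h3 : (G * fun ω => (1 + X ω) ^ (-(n : ℝ)))
        = fun ω => G ω * (1 + X ω) ^ (-(n : ℝ)) := rfl
    rw [h3] at this
    rw [this, hGval]
  refine ⟨hXint, heq, ?_⟩
  rw [heq]
  -- final inequality
  have hψint : Integrable (fun ω => (1 + X ω) ^ (-(n : ℝ))) ℙ := by
    refine (integrable_const (1 : ℝ)).mono' hψXaesm ?_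
    refine Filter.Eventually.of_forall fun ω => ?_
    rw [Real.norm_eq_abs, abs_of_nonneg (hψ0 ω)]
    exact hψ1 ω
  have hψle : 𝔼[fun ω => (1 + X ω) ^ (-(n : ℝ))] ≤ 1 := by
    calc 𝔼[fun ω => (1 + X ω) ^ (-(n : ℝ))] ≤ ∫ _, (1 : ℝ) ∂ℙ :=
          integral_mono hψint (integrable_const 1) hψ1
      _ = 1 := by simp
  calc E * 𝔼[fun ω => (1 + X ω) ^ (-(n : ℝ))] ≤ E * 1 :=
        mul_le_mul_of_nonneg_left hψle (Real.exp_pos _).le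
    _ = E := mul_one _
end

section
/- Under the assumptions of the fixed-point equation X∞ = A(1+X∞), for every ε > 0 and n ∈ ℕ, P(X∞ ≤ ε) ≤ ε^n · exp(σ²τ n(n+1)/2 - n m τ). -/
open MeasureTheory ProbabilityTheory Real
open scoped ENNReal NNReal

lemma gauss_mul_pdf (t x : ℝ) :
    rexp (t * x) * gaussianPDFReal 0 1 x = rexp (t^2/2) * gaussianPDFReal t 1 x := by
  simp only [gaussianPDFReal, NNReal.coe_one, mul_one, sub_zero]
  rw [mul_left_comm, mul_left_comm (rexp (t^2/2)), ← Real.exp_add, ← Real.exp_add]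
  congr 2
  ring

lemma gauss_integrable_aux (t : ℝ) :
    Integrable (fun x => rexp (t * x) * gaussianPDFReal 0 1 x) := by
  have : (fun x => rexp (t * x) * gaussianPDFReal 0 1 x)
      = fun x => rexp (t^2/2) * gaussianPDFReal t 1 x := by
    ext x; exact gauss_mul_pdf t x
  rw [this]
  exact (integrable_gaussianPDFReal t 1).const_mul _

lemma gauss_int_aux (t : ℝ) :
    ∫ x, rexp (t * x) * gaussianPDFReal 0 1 x = rexp (t^2/2) := by
  simp_rw [gauss_mul_pdf]
  rw [integral_const_mul, integral_gaussianPDFReal_eq_one t one_ne_zero, mul_one]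

lemma gauss_integrable (t : ℝ) :
    Integrable (fun x => rexp (t * x)) (gaussianReal 0 1) := by
  rw [gaussianReal_of_var_ne_zero 0 one_ne_zero, gaussianPDF_def,
    integrable_withDensity_iff (measurable_gaussianPDFReal 0 1).ennreal_ofReal
      (Filter.Eventually.of_forall fun x => ENNReal.ofReal_lt_top)]
  have : (fun x => rexp (t * x) * (ENNReal.ofReal (gaussianPDFReal 0 1 x)).toReal)
      = fun x => rexp (t * x) * gaussianPDFReal 0 1 x := by
    ext x
    rw [ENNReal.toReal_ofReal (gaussianPDFReal_nonneg 0 1 x)]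
  rw [this]
  exact gauss_integrable_aux t

lemma gauss_mgf (t : ℝ) : ∫ x, rexp (t * x) ∂(gaussianReal 0 1) = rexp (t^2/2) := by
  rw [gaussianReal_of_var_ne_zero 0 one_ne_zero, gaussianPDF_def]
  rw [show (fun x => ENNReal.ofReal (gaussianPDFReal 0 1 x))
      = fun x => ((gaussianPDFReal 0 1 x).toNNReal : ℝ≥0∞) from rfl]
  rw [integral_withDensity_eq_integral_smul
    (measurable_gaussianPDFReal 0 1).real_toNNReal _]
  rw [← gauss_int_aux t]
  congr 1
  ext x
  simp only [NNReal.smul_def, smul_eq_mul, Real.coe_toNNReal _ (gaussianPDFReal_nonneg 0 1 x)]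
  ring

/-- Left-tail bound for the stationary solution of `X∞ = A(1+X∞)`:
for every `ε > 0` and `n ∈ ℕ`, `P(X∞ ≤ ε) ≤ εⁿ exp(σ²τ n(n+1)/2 - nmτ)`. -/
theorem stmt4 {Ω : Type*} [MeasureSpace Ω] [IsProbabilityMeasure (ℙ : Measure Ω)]
    (σ τ m : ℝ) (hσ : 0 < σ) (hτ : 0 < τ) (hm : m < σ ^ 2 / 2)
    (Z : Ω → ℝ) (hZ : Measure.map Z ℙ = gaussianReal 0 1)
    (A X : Ω → ℝ)
    (hA : ∀ ω, A ω = Real.exp (σ * Real.sqrt τ * Z ω + (m - σ ^ 2 / 2) * τ))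
    (hXpos : ∀ ω, 0 ≤ X ω) (hXmeas : Measurable X)
    (hindep : IndepFun A X ℙ)
    (hfix : Measure.map X ℙ = Measure.map (fun ω => A ω * (1 + X ω)) ℙ) :
    ∀ ε : ℝ, 0 < ε → ∀ n : ℕ,
      (ℙ {ω | X ω ≤ ε}).toReal
        ≤ ε ^ n * Real.exp (σ ^ 2 * τ * n * (n + 1) / 2 - n * m * τ) := by
  intro ε hε n
  set s : ℝ := σ * Real.sqrt τ with hs_def
  have hs : 0 < s := mul_pos hσ (Real.sqrt_pos.mpr hτ)
  set b : ℝ := (m - σ ^ 2 / 2) * τ with hb_def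
  set c : ℝ := (Real.log ε - b) / s with hc_def
  -- Z is a.e.-measurable
  have hZae : AEMeasurable Z ℙ := by
    by_contra h
    rw [Measure.map_of_not_aemeasurable h] at hZ
    exact (IsProbabilityMeasure.ne_zero (gaussianReal 0 1)) hZ.symm
  have hAae : AEMeasurable A ℙ := by
    have h1 : AEMeasurable (fun ω => rexp (s * Z ω + b)) ℙ :=
      (Real.measurable_exp.comp_aemeasurable ((hZae.const_mul s).add_const b))
    exact h1.congr (Filter.Eventually.of_forall fun ω => (hA ω).symm)
  have hABae : AEMeasurable (fun ω => A ω * (1 + X ω)) ℙ :=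
    hAae.mul ((aemeasurable_const.add hXmeas.aemeasurable))
  -- transport the event through the fixed-point equation
  have key : ℙ {ω | X ω ≤ ε} = ℙ {ω | A ω * (1 + X ω) ≤ ε} := by
    have h1 : ℙ {ω | X ω ≤ ε} = (Measure.map X ℙ) (Set.Iic ε) := by
      rw [Measure.map_apply hXmeas measurableSet_Iic]; rfl
    have h2 : (Measure.map (fun ω => A ω * (1 + X ω)) ℙ) (Set.Iic ε)
        = ℙ {ω | A ω * (1 + X ω) ≤ ε} := by
      rw [Measure.map_apply_of_aemeasurable hABae measurableSet_Iic]; rfl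
    rw [h1, hfix, h2]
  have hsub : {ω | A ω * (1 + X ω) ≤ ε} ⊆ {ω | Z ω ≤ c} := by
    intro ω hω
    simp only [Set.mem_setOf_eq] at hω ⊢
    have hApos : 0 < A ω := by rw [hA ω]; exact Real.exp_pos _
    have hAle : A ω ≤ ε := le_trans (by nlinarith [hXpos ω]) hω
    rw [hA ω] at hAle
    have hlog : s * Z ω + b ≤ Real.log ε := (Real.exp_le_exp.mp
      (by rwa [Real.exp_log hε])).trans_eq rfl
    rw [hc_def, le_div_iff₀ hs, mul_comm]
    linarith
  -- Chernoff bound for the Gaussian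
  set t : ℝ := -((n : ℝ) * s) with ht_def
  have ht : t ≤ 0 := neg_nonpos.mpr (mul_nonneg (Nat.cast_nonneg n) hs.le)
  have hasm : AEStronglyMeasurable (fun x : ℝ => rexp (t * x)) (Measure.map Z ℙ) :=
    (Real.measurable_exp.comp (measurable_const_mul t)).aestronglyMeasurable
  have hint : Integrable (fun ω => rexp (t * Z ω)) ℙ := by
    have h0 : Integrable (fun x => rexp (t * x)) (Measure.map Z ℙ) := by
      rw [hZ]; exact gauss_integrable t
    exact (integrable_map_measure hasm hZae).mp h0
  have hmgf : mgf Z ℙ t = rexp (t ^ 2 / 2) := by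
    rw [mgf, ← integral_map hZae hasm, hZ, gauss_mgf]
  have hch : (ℙ {ω | Z ω ≤ c}).toReal ≤ rexp (-t * c) * mgf Z ℙ t :=
    measure_le_le_exp_mul_mgf (X := Z) (t := t) c ht hint
  -- combine
  have hmono : (ℙ {ω | X ω ≤ ε}).toReal ≤ (ℙ {ω | Z ω ≤ c}).toReal := by
    rw [key]
    exact ENNReal.toReal_mono (measure_ne_top _ _) (measure_mono hsub)
  refine hmono.trans (hch.trans_eq ?_)
  rw [hmgf, ← Real.exp_add]
  have hsc : s * c = Real.log ε - b := by
    rw [hc_def, mul_div_cancel₀ _ hs.ne']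
  have hs2 : s ^ 2 = σ ^ 2 * τ := by
    rw [hs_def, mul_pow, Real.sq_sqrt hτ.le]
  have hεn : ε ^ n = rexp ((n : ℝ) * Real.log ε) := by
    rw [← Real.exp_log hε, ← Real.exp_nat_mul, Real.exp_log hε]
  rw [hεn, ← Real.exp_add]
  congr 1
  have h1 : -t * c = (n : ℝ) * (Real.log ε - b) := by
    rw [ht_def, neg_neg, mul_assoc, hsc]
  have h2 : t ^ 2 / 2 = (n : ℝ) ^ 2 * (σ ^ 2 * τ) / 2 := by
    rw [ht_def, neg_pow, mul_pow, ← hs2]; ring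
  rw [h1, h2, hb_def]
  ring
end

section
/- Let X∞ ≥ 0 satisfy X∞ = A(1+X∞) in distribution (A log-normal as above, independent of X∞). Then lim_{ε→0} log P(X∞ ≤ ε) / (log ε)² = -1/(2σ²τ). -/
open MeasureTheory ProbabilityTheory Real Set Filter
open scoped Topology

lemma gpdf_eq (x : ℝ) : gaussianPDFReal 0 1 x = (Real.sqrt (2*π))⁻¹ * Real.exp (-x^2/2) := by
  rw [gaussianPDFReal]
  norm_num

lemma gpdf_integrableOn (t : ℝ) : IntegrableOn (gaussianPDFReal 0 1) (Iic t) :=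
  (integrable_gaussianPDFReal 0 1).integrableOn

lemma sqrt2pi_ge_one : (1:ℝ) ≤ Real.sqrt (2*π) := by
  rw [show (1:ℝ) = Real.sqrt 1 by simp]
  apply Real.sqrt_le_sqrt
  nlinarith [Real.pi_gt_three]

lemma gaussU {t : ℝ} (ht : t ≤ -1) :
    ∫ x in Iic t, gaussianPDFReal 0 1 x ≤ Real.exp (-t^2/2) := by
  have h1 : ∫ x in Iic t, gaussianPDFReal 0 1 x
      ≤ ∫ x in Iic t, (Real.sqrt (2*π))⁻¹ * Real.exp (-t^2/2) * Real.exp (x - t) := by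
    refine setIntegral_mono_on (gpdf_integrableOn t) ?_ measurableSet_Iic ?_
    · have h := (integrableOn_exp_Iic t).const_mul
        ((Real.sqrt (2*π))⁻¹ * Real.exp (-t^2/2) / Real.exp t)
      refine h.congr (ae_of_all _ (fun x => ?_))
      simp only [Real.exp_sub]
      ring
    · intro x hx
      simp only [mem_Iic] at hx
      rw [gpdf_eq]
      have hexp : Real.exp (-x^2/2) ≤ Real.exp (-t^2/2) * Real.exp (x - t) := by
        rw [← Real.exp_add, Real.exp_le_exp]
        nlinarith
      have hpos : (0:ℝ) < (Real.sqrt (2*π))⁻¹ := by positivity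
      calc (Real.sqrt (2*π))⁻¹ * Real.exp (-x^2/2)
          ≤ (Real.sqrt (2*π))⁻¹ * (Real.exp (-t^2/2) * Real.exp (x - t)) := by
            exact mul_le_mul_of_nonneg_left hexp hpos.le
        _ = (Real.sqrt (2*π))⁻¹ * Real.exp (-t^2/2) * Real.exp (x - t) := by ring
  have h2 : ∫ x in Iic t, (Real.sqrt (2*π))⁻¹ * Real.exp (-t^2/2) * Real.exp (x - t)
      = (Real.sqrt (2*π))⁻¹ * Real.exp (-t^2/2) := by
    have : ∀ x : ℝ, (Real.sqrt (2*π))⁻¹ * Real.exp (-t^2/2) * Real.exp (x - t)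
        = ((Real.sqrt (2*π))⁻¹ * Real.exp (-t^2/2) / Real.exp t) * Real.exp x := by
      intro x; rw [Real.exp_sub]; ring
    simp_rw [this]
    rw [integral_const_mul, integral_exp_Iic]
    field_simp
  rw [h2] at h1
  refine h1.trans ?_
  have := sqrt2pi_ge_one
  have h3 : (Real.sqrt (2*π))⁻¹ ≤ 1 := by
    rw [inv_le_one_iff₀]; right; exact this
  nlinarith [Real.exp_pos (-t^2/2)]

lemma gaussL {t : ℝ} (ht : t ≤ 0) :
    (Real.sqrt (2*π))⁻¹ * Real.exp (-(t-1)^2/2) ≤ ∫ x in Iic t, gaussianPDFReal 0 1 x := by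
  have h0 : (Real.sqrt (2*π))⁻¹ * Real.exp (-(t-1)^2/2)
      = ∫ x in Ioc (t-1) t, ((Real.sqrt (2*π))⁻¹ * Real.exp (-(t-1)^2/2)) := by
    rw [setIntegral_const]
    rw [measureReal_def, Real.volume_Ioc]
    norm_num
  rw [h0]
  have h1 : ∫ x in Ioc (t-1) t, ((Real.sqrt (2*π))⁻¹ * Real.exp (-(t-1)^2/2))
      ≤ ∫ x in Ioc (t-1) t, gaussianPDFReal 0 1 x := by
    refine setIntegral_mono_on (integrableOn_const ?_) ((gpdf_integrableOn t).mono_set Ioc_subset_Iic_self) measurableSet_Ioc ?_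
    · rw [Real.volume_Ioc]; exact ENNReal.ofReal_ne_top
    · intro x hx
      simp only [mem_Ioc] at hx
      rw [gpdf_eq]
      have : Real.exp (-(t-1)^2/2) ≤ Real.exp (-x^2/2) := by
        rw [Real.exp_le_exp]; nlinarith [hx.1, hx.2]
      have hpos : (0:ℝ) < (Real.sqrt (2*π))⁻¹ := by positivity
      exact mul_le_mul_of_nonneg_left this hpos.le
  refine h1.trans ?_
  exact setIntegral_mono_set (gpdf_integrableOn t)
    (ae_of_all _ (fun x => gaussianPDFReal_nonneg 0 1 x)) (HasSubset.Subset.eventuallyLE Ioc_subset_Iic_self)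

lemma inv_tendsto_atBot_zero : Tendsto (fun t : ℝ => t⁻¹) atBot (𝓝 0) := by
  have h2 := ((tendsto_neg_atBot_atTop (G := ℝ)).inv_tendsto_atTop).neg
  rw [neg_zero] at h2
  refine h2.congr (fun t => ?_)
  show -(-t)⁻¹ = t⁻¹
  rw [inv_neg, neg_neg]

lemma gaussP {t : ℝ} (ht : t ≤ 0) : 0 < ∫ x in Iic t, gaussianPDFReal 0 1 x :=
  lt_of_lt_of_le (by positivity) (gaussL ht)

lemma gauss_log :
    Tendsto (fun t : ℝ => Real.log (∫ x in Iic t, gaussianPDFReal 0 1 x) / t^2)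
      atBot (𝓝 (-1/2)) := by
  set C : ℝ := Real.log (Real.sqrt (2*π)) with hC
  have hlow : Tendsto (fun t : ℝ => (-(t-1)^2/2 - C) / t^2) atBot (𝓝 (-1/2)) := by
    have hφ : Continuous (fun u : ℝ => -(1-u)^2/2 - C * u^2) := by continuity
    have h0 : Tendsto (fun t : ℝ => -(1-t⁻¹)^2/2 - C * (t⁻¹)^2) atBot (𝓝 (-(1-0)^2/2 - C * 0^2)) :=
      (hφ.tendsto 0).comp inv_tendsto_atBot_zero
    have he : (-(1-(0:ℝ))^2/2 - C * 0^2) = -1/2 := by norm_num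
    rw [he] at h0
    refine h0.congr' ?_
    filter_upwards [eventually_lt_atBot (0:ℝ)] with t ht
    have ht' : t ≠ 0 := ht.ne
    field_simp
  refine tendsto_of_tendsto_of_tendsto_of_le_of_le' hlow tendsto_const_nhds ?_ ?_
  · filter_upwards [eventually_le_atBot (-1:ℝ)] with t ht
    have ht0 : t ≤ 0 := ht.trans (by norm_num)
    have hP := gaussP ht0
    have hlogle : -(t-1)^2/2 - C ≤ Real.log (∫ x in Iic t, gaussianPDFReal 0 1 x) := by
      have := Real.log_le_log (by positivity) (gaussL ht0)
      rw [Real.log_mul (by positivity) (by positivity), Real.log_inv, Real.log_exp] at this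
      linarith
    have ht2 : (0:ℝ) < t^2 := by nlinarith
    exact (div_le_div_iff_of_pos_right ht2).mpr hlogle
  · filter_upwards [eventually_le_atBot (-1:ℝ)] with t ht
    have ht0 : t ≤ 0 := ht.trans (by norm_num)
    have hP := gaussP ht0
    have hlogle : Real.log (∫ x in Iic t, gaussianPDFReal 0 1 x) ≤ -t^2/2 := by
      have := Real.log_le_log hP (gaussU ht)
      rwa [Real.log_exp] at this
    have ht2 : (0:ℝ) < t^2 := by nlinarith
    calc Real.log (∫ x in Iic t, gaussianPDFReal 0 1 x) / t^2 ≤ (-t^2/2) / t^2 :=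
          (div_le_div_iff_of_pos_right ht2).mpr hlogle
      _ = -1/2 := by have ht' : t ≠ 0 := (by linarith : t < 0).ne; field_simp

-- convergence lemma for the gaussian CDF term, for arbitrary constant shift d
lemma gauss_limit (s d : ℝ) (hs : 0 < s) :
    Tendsto (fun ε : ℝ =>
        Real.log (∫ x in Iic ((Real.log ε - d)/s), gaussianPDFReal 0 1 x) / (Real.log ε)^2)
      (nhdsWithin 0 (Set.Ioi 0)) (𝓝 (-1/2 * (1/s)^2)) := by
  set G' : ℝ → ℝ := fun t => ∫ x in Iic t, gaussianPDFReal 0 1 x with hG'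
  have h1 : Tendsto (fun ε : ℝ => Real.log ε) (nhdsWithin 0 (Set.Ioi 0)) atBot :=
    Real.tendsto_log_nhdsGT_zero
  have hT : Tendsto (fun ε : ℝ => (Real.log ε - d)/s) (nhdsWithin 0 (Set.Ioi 0)) atBot := by
    apply Tendsto.atBot_div_const hs
    simpa [sub_eq_add_neg] using tendsto_atBot_add_const_right _ (-d) h1
  have hcomp : Tendsto (fun ε : ℝ => Real.log (G' ((Real.log ε - d)/s)) / ((Real.log ε - d)/s)^2)
      (nhdsWithin 0 (Set.Ioi 0)) (𝓝 (-1/2)) := gauss_log.comp hT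
  have hinv : Tendsto (fun ε : ℝ => (Real.log ε)⁻¹) (nhdsWithin 0 (Set.Ioi 0)) (𝓝 0) :=
    inv_tendsto_atBot_zero.comp h1
  have hratio : Tendsto (fun ε : ℝ => (((Real.log ε - d)/s) / Real.log ε)^2)
      (nhdsWithin 0 (Set.Ioi 0)) (𝓝 ((1/s)^2)) := by
    have hb : Tendsto (fun ε : ℝ => (1 - d * (Real.log ε)⁻¹)/s)
        (nhdsWithin 0 (Set.Ioi 0)) (𝓝 ((1 - d * 0)/s)) :=
      ((tendsto_const_nhds.sub (hinv.const_mul d)).div_const s)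
    have hb' : Tendsto (fun ε : ℝ => (1 - d * (Real.log ε)⁻¹)/s)
        (nhdsWithin 0 (Set.Ioi 0)) (𝓝 (1/s)) := by simpa using hb
    refine (hb'.pow 2).congr' ?_
    filter_upwards [h1.eventually (eventually_lt_atBot (0:ℝ))] with ε hε
    have hne : Real.log ε ≠ 0 := hε.ne
    have heq : (Real.log ε - d)/s/Real.log ε = (1 - d * (Real.log ε)⁻¹)/s := by
      field_simp
    rw [heq]
  have hmul := hcomp.mul hratio
  refine hmul.congr' ?_
  filter_upwards [h1.eventually (eventually_lt_atBot (0:ℝ)),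
    hT.eventually (eventually_lt_atBot (0:ℝ))] with ε hε hTε
  have hne : Real.log ε ≠ 0 := hε.ne
  have hTne : (Real.log ε - d)/s ≠ 0 := hTε.ne
  show Real.log (G' ((Real.log ε - d)/s)) / ((Real.log ε - d)/s)^2 * (((Real.log ε - d)/s) / Real.log ε)^2
      = Real.log (G' ((Real.log ε - d)/s)) / (Real.log ε)^2
  generalize (Real.log (G' ((Real.log ε - d)/s))) = a
  generalize hT2 : (Real.log ε - d)/s = T at hTne
  field_simp

lemma gaussP' (t : ℝ) : 0 < ∫ x in Iic t, gaussianPDFReal 0 1 x := by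
  rcases le_total t 0 with h|h
  · exact gaussP h
  · refine lt_of_lt_of_le (gaussP le_rfl) ?_
    exact setIntegral_mono_set (gpdf_integrableOn t)
      (ae_of_all _ (fun x => gaussianPDFReal_nonneg 0 1 x))
      (HasSubset.Subset.eventuallyLE (Iic_subset_Iic.mpr h))

/-- Left-tail asymptotics of the stationary solution of `X∞ = A(1+X∞)`:
`lim_{ε→0⁺} log P(X∞ ≤ ε) / (log ε)² = -1/(2σ²τ)`. -/
theorem stmt5 {Ω : Type*} [MeasureSpace Ω] [IsProbabilityMeasure (ℙ : Measure Ω)]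
    (σ τ m : ℝ) (hσ : 0 < σ) (hτ : 0 < τ) (hm : m < σ ^ 2 / 2)
    (Z : Ω → ℝ) (hZ : Measure.map Z ℙ = gaussianReal 0 1)
    (A X : Ω → ℝ)
    (hA : ∀ ω, A ω = Real.exp (σ * Real.sqrt τ * Z ω + (m - σ ^ 2 / 2) * τ))
    (hXpos : ∀ ω, 0 ≤ X ω) (hXmeas : Measurable X)
    (hindep : IndepFun A X ℙ)
    (hfix : Measure.map X ℙ = Measure.map (fun ω => A ω * (1 + X ω)) ℙ) :
    Filter.Tendsto
      (fun ε : ℝ => Real.log (ℙ {ω | X ω ≤ ε}).toReal / (Real.log ε) ^ 2)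
      (nhdsWithin 0 (Set.Ioi 0)) (nhds (-1 / (2 * σ ^ 2 * τ))) := by
  have hs : 0 < σ * Real.sqrt τ := by positivity
  set s := σ * Real.sqrt τ with hsdef
  set c := (m - σ ^ 2 / 2) * τ with hcdef
  set G' : ℝ → ℝ := fun t => ∫ x in Iic t, gaussianPDFReal 0 1 x with hG'
  have hApos : ∀ ω, 0 < A ω := fun ω => by rw [hA]; exact Real.exp_pos _
  have hZae : AEMeasurable Z ℙ := by
    apply aemeasurable_of_map_neZero
    rw [hZ]; infer_instance
  have hAae : AEMeasurable A ℙ := by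
    have hAeq : A = fun ω => Real.exp (s * Z ω + c) := funext hA
    rw [hAeq]
    exact Real.measurable_exp.comp_aemeasurable ((hZae.const_mul s).add_const c)
  have hYae : AEMeasurable (fun ω => A ω * (1 + X ω)) ℙ :=
    hAae.mul (aemeasurable_const.add hXmeas.aemeasurable)
  have hmapX : ∀ r : ℝ, ℙ {ω | X ω ≤ r} = ℙ {ω | A ω * (1 + X ω) ≤ r} := by
    intro r
    have h1 : ℙ {ω | X ω ≤ r} = Measure.map X ℙ (Iic r) := by
      rw [Measure.map_apply_of_aemeasurable hXmeas.aemeasurable measurableSet_Iic]; rfl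
    have h2 : ℙ {ω | A ω * (1 + X ω) ≤ r} = Measure.map (fun ω => A ω * (1 + X ω)) ℙ (Iic r) := by
      rw [Measure.map_apply_of_aemeasurable hYae measurableSet_Iic]; rfl
    rw [h1, h2, hfix]
  have hPA : ∀ ε : ℝ, 0 < ε → ℙ {ω | A ω ≤ ε} = ENNReal.ofReal (G' ((Real.log ε - c)/s)) := by
    intro ε hε
    have hset : {ω | A ω ≤ ε} = Z ⁻¹' (Iic ((Real.log ε - c)/s)) := by
      ext ω
      simp only [Set.mem_setOf_eq, Set.mem_preimage, Set.mem_Iic, hA]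
      rw [← Real.le_log_iff_exp_le hε, le_div_iff₀ hs]
      constructor <;> intro h <;> nlinarith
    rw [hset, ← Measure.map_apply_of_aemeasurable hZae measurableSet_Iic, hZ,
      gaussianReal_apply_eq_integral 0 one_ne_zero]
  have hub : ∀ ε : ℝ, ℙ {ω | X ω ≤ ε} ≤ ℙ {ω | A ω ≤ ε} := by
    intro ε
    rw [hmapX ε]
    apply measure_mono
    intro ω hω
    simp only [Set.mem_setOf_eq] at *
    nlinarith [hApos ω, hXpos ω]
  have hlb : ∀ ε δ : ℝ, 0 ≤ δ →
      ℙ {ω | A ω ≤ ε/(1+δ)} * ℙ {ω | X ω ≤ δ} ≤ ℙ {ω | X ω ≤ ε} := by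
    intro ε δ hδ
    rw [hmapX ε]
    have hind := hindep.measure_inter_preimage_eq_mul (Iic (ε/(1+δ))) (Iic δ)
        measurableSet_Iic measurableSet_Iic
    rw [show A ⁻¹' (Iic (ε/(1+δ))) = {ω | A ω ≤ ε/(1+δ)} from rfl,
      show X ⁻¹' (Iic δ) = {ω | X ω ≤ δ} from rfl] at hind
    rw [← hind]
    apply measure_mono
    rintro ω ⟨h1, h2⟩
    simp only [Set.mem_setOf_eq] at *
    have hδ1 : (0:ℝ) < 1 + δ := by linarith
    have h3 : A ω * (1 + X ω) ≤ A ω * (1 + δ) := by nlinarith [hApos ω]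
    have h4 : A ω * (1 + δ) ≤ (ε/(1+δ)) * (1+δ) :=
      mul_le_mul_of_nonneg_right h1 hδ1.le
    have h5 : (ε/(1+δ)) * (1+δ) = ε := div_mul_cancel₀ ε hδ1.ne'
    linarith
  have hp0 : ℙ {ω | X ω ≤ 1} ≠ 0 := by
    obtain ⟨n, hn⟩ : ∃ n : ℕ, ℙ {ω | X ω ≤ (n:ℝ)} ≠ 0 := by
      by_contra h
      push_neg at h
      have h0 : ℙ (⋃ n : ℕ, {ω | X ω ≤ (n:ℝ)}) = 0 := measure_iUnion_null h
      have huniv : (⋃ n : ℕ, {ω | X ω ≤ (n:ℝ)}) = Set.univ := by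
        ext ω
        simp only [Set.mem_iUnion, Set.mem_setOf_eq, Set.mem_univ, iff_true]
        exact exists_nat_ge (X ω)
      rw [huniv, measure_univ] at h0
      exact one_ne_zero h0
    have hle := hlb 1 n (Nat.cast_nonneg n)
    intro h0
    rw [h0] at hle
    have h00 := le_antisymm hle zero_le
    rcases mul_eq_zero.mp h00 with h|h
    · have hA0 : ℙ {ω | A ω ≤ 1/(1+(n:ℝ))} ≠ 0 := by
        rw [hPA _ (by positivity)]
        simp only [ne_eq, ENNReal.ofReal_eq_zero, not_le]
        exact gaussP' _
      exact hA0 h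
    · exact hn h
  set p := (ℙ {ω | X ω ≤ 1}).toReal with hpdef
  have hppos : 0 < p := ENNReal.toReal_pos hp0 (measure_ne_top _ _)
  -- real-valued bounds
  have hFU : ∀ ε : ℝ, 0 < ε →
      (ℙ {ω | X ω ≤ ε}).toReal ≤ G' ((Real.log ε - c)/s) := by
    intro ε hε
    have h := hub ε
    rw [hPA ε hε] at h
    calc (ℙ {ω | X ω ≤ ε}).toReal
        ≤ (ENNReal.ofReal (G' ((Real.log ε - c)/s))).toReal :=
          ENNReal.toReal_mono ENNReal.ofReal_ne_top h
      _ = G' ((Real.log ε - c)/s) := ENNReal.toReal_ofReal (gaussP' _).le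
  have hFL : ∀ ε : ℝ, 0 < ε →
      G' ((Real.log ε - (c + Real.log 2))/s) * p ≤ (ℙ {ω | X ω ≤ ε}).toReal := by
    intro ε hε
    have h := hlb ε 1 zero_le_one
    rw [hPA (ε/(1+1)) (by positivity)] at h
    have hlog2 : (Real.log (ε/(1+1)) - c)/s = (Real.log ε - (c + Real.log 2))/s := by
      rw [show (1:ℝ)+1 = 2 by norm_num, Real.log_div hε.ne' two_ne_zero]
      ring_nf
    rw [hlog2] at h
    have h2 : (ENNReal.ofReal (G' ((Real.log ε - (c + Real.log 2))/s)) * ℙ {ω | X ω ≤ 1}).toReal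
        = G' ((Real.log ε - (c + Real.log 2))/s) * p := by
      rw [ENNReal.toReal_mul, ENNReal.toReal_ofReal (gaussP' _).le]
    calc G' ((Real.log ε - (c + Real.log 2))/s) * p
        = (ENNReal.ofReal (G' ((Real.log ε - (c + Real.log 2))/s)) * ℙ {ω | X ω ≤ 1}).toReal :=
          h2.symm
      _ ≤ (ℙ {ω | X ω ≤ ε}).toReal :=
          ENNReal.toReal_mono (measure_ne_top _ _) h
  -- limits
  have hs2 : s^2 = σ^2 * τ := by
    rw [hsdef, mul_pow, Real.sq_sqrt hτ.le]
  have hval : -1/2 * (1/s)^2 = -1 / (2 * σ ^ 2 * τ) := by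
    rw [div_pow, one_pow, hs2]
    field_simp
  have hupper : Tendsto (fun ε : ℝ => Real.log (G' ((Real.log ε - c)/s)) / (Real.log ε)^2)
      (nhdsWithin 0 (Set.Ioi 0)) (𝓝 (-1 / (2 * σ ^ 2 * τ))) := by
    rw [← hval]; exact gauss_limit s c hs
  have hloginv : Tendsto (fun ε : ℝ => (Real.log ε)⁻¹) (nhdsWithin 0 (Set.Ioi 0)) (𝓝 0) :=
    inv_tendsto_atBot_zero.comp Real.tendsto_log_nhdsGT_zero
  have hlower : Tendsto
      (fun ε : ℝ => (Real.log (G' ((Real.log ε - (c + Real.log 2))/s)) + Real.log p) / (Real.log ε)^2)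
      (nhdsWithin 0 (Set.Ioi 0)) (𝓝 (-1 / (2 * σ ^ 2 * τ))) := by
    have hmain : Tendsto (fun ε : ℝ => Real.log (G' ((Real.log ε - (c + Real.log 2))/s)) / (Real.log ε)^2)
        (nhdsWithin 0 (Set.Ioi 0)) (𝓝 (-1 / (2 * σ ^ 2 * τ))) := by
      rw [← hval]; exact gauss_limit s (c + Real.log 2) hs
    have hzero : Tendsto (fun ε : ℝ => Real.log p * ((Real.log ε)⁻¹)^2)
        (nhdsWithin 0 (Set.Ioi 0)) (𝓝 (Real.log p * 0^2)) :=
      (hloginv.pow 2).const_mul _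
    have hsum := hmain.add hzero
    norm_num at hsum
    refine hsum.congr (fun ε => ?_)
    rw [add_div]
    ring
  -- squeeze
  refine tendsto_of_tendsto_of_tendsto_of_le_of_le' hlower hupper ?_ ?_
  · filter_upwards [Ioo_mem_nhdsGT (by norm_num : (0:ℝ) < 1)] with ε hε
    obtain ⟨hε0, hε1⟩ := hε
    have hlneg : Real.log ε < 0 := Real.log_neg hε0 hε1
    have hl2 : (0:ℝ) < (Real.log ε)^2 := by nlinarith
    have hG2pos := gaussP' ((Real.log ε - (c + Real.log 2))/s)
    have hFL' := hFL ε hε0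
    have hFpos : 0 < (ℙ {ω | X ω ≤ ε}).toReal :=
      lt_of_lt_of_le (mul_pos hG2pos hppos) hFL'
    have hloglog : Real.log (G' ((Real.log ε - (c + Real.log 2))/s)) + Real.log p
        ≤ Real.log (ℙ {ω | X ω ≤ ε}).toReal := by
      have := Real.log_le_log (mul_pos hG2pos hppos) hFL'
      rwa [Real.log_mul hG2pos.ne' hppos.ne'] at this
    exact (div_le_div_iff_of_pos_right hl2).mpr hloglog
  · filter_upwards [Ioo_mem_nhdsGT (by norm_num : (0:ℝ) < 1)] with ε hε
    obtain ⟨hε0, hε1⟩ := hε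
    have hlneg : Real.log ε < 0 := Real.log_neg hε0 hε1
    have hl2 : (0:ℝ) < (Real.log ε)^2 := by nlinarith
    have hG2pos := gaussP' ((Real.log ε - (c + Real.log 2))/s)
    have hFpos : 0 < (ℙ {ω | X ω ≤ ε}).toReal :=
      lt_of_lt_of_le (mul_pos hG2pos hppos) (hFL ε hε0)
    have hloglog : Real.log (ℙ {ω | X ω ≤ ε}).toReal ≤ Real.log (G' ((Real.log ε - c)/s)) :=
      Real.log_le_log hFpos (hFU ε hε0)
    exact (div_le_div_iff_of_pos_right hl2).mpr hloglog
end

section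
/- If m < 0, then τ Σ_{i=1}^{∞} exp(σ W_{t_{i-1}} + (m - σ²/2) t_{i-1}) converges in L¹ to ∫₀^∞ exp(σ W_t + (m - σ²/2) t) dt as τ → 0, where t_i = iτ. -/
open MeasureTheory ProbabilityTheory Real

open scoped NNReal ENNReal

lemma gaussian_mgf (a : ℝ) (v : ℝ≥0) :
    ∫⁻ z, ENNReal.ofReal (Real.exp (a * z)) ∂(gaussianReal 0 v) =
      ENNReal.ofReal (Real.exp (a ^ 2 * v / 2)) := by
  rcases eq_or_ne v 0 with hv | hv
  · subst hv; rw [gaussianReal_zero_var, lintegral_dirac]; simp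
  · rw [gaussianReal_of_var_ne_zero _ hv,
      lintegral_withDensity_eq_lintegral_mul _ (measurable_gaussianPDF _ _) (by fun_prop)]
    have key : ∀ z : ℝ, (gaussianPDF 0 v * fun z => ENNReal.ofReal (Real.exp (a * z))) z
        = ENNReal.ofReal (Real.exp (a ^ 2 * v / 2)) * gaussianPDF (a * v) v z := by
      intro z
      simp only [Pi.mul_apply, gaussianPDF, ← ENNReal.ofReal_mul (gaussianPDFReal_nonneg _ _ _),
        ← ENNReal.ofReal_mul (Real.exp_nonneg _)]
      congr 1
      unfold gaussianPDFReal
      have hv0 : (0:ℝ) < (v:ℝ) := by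
        exact_mod_cast hv.bot_lt
      rw [mul_assoc, ← Real.exp_add, mul_left_comm, ← Real.exp_add]
      congr 2
      field_simp
      ring
    rw [lintegral_congr key, lintegral_const_mul _ (measurable_gaussianPDF _ _),
      lintegral_gaussianPDF_eq_one _ hv, mul_one]

lemma lintegral_exp_affine {Ω : Type*} [MeasureSpace Ω] {X : Ω → ℝ} (hX : Measurable X)
    {v : ℝ≥0} (hmap : Measure.map X ℙ = gaussianReal 0 v) (a b : ℝ) :
    ∫⁻ ω, ENNReal.ofReal (Real.exp (a * X ω + b)) ∂ℙ
      = ENNReal.ofReal (Real.exp (a ^ 2 * v / 2 + b)) := by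
  have h1 : ∫⁻ ω, ENNReal.ofReal (Real.exp (a * X ω + b)) ∂ℙ
      = ∫⁻ z, ENNReal.ofReal (Real.exp (a * z + b)) ∂(gaussianReal 0 v) := by
    rw [← hmap, lintegral_map (by fun_prop) hX]
  rw [h1]
  simp_rw [Real.exp_add, ENNReal.ofReal_mul (Real.exp_nonneg _)]
  rw [lintegral_mul_const _ (by fun_prop), gaussian_mgf]

lemma abs_exp_sub_one_le' (x : ℝ) : |Real.exp x - 1| ≤ |x| * Real.exp |x| := by
  rcases le_or_gt 0 x with hx | hx
  · rw [abs_of_nonneg (by simpa using Real.exp_le_exp.mpr hx : (0:ℝ) ≤ Real.exp x - 1),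
      abs_of_nonneg hx]
    have h2 : 1 - x ≤ Real.exp (-x) := by have := Real.add_one_le_exp (-x); linarith
    have h3 : Real.exp x * (1 - x) ≤ 1 := by
      have := mul_le_mul_of_nonneg_left h2 (Real.exp_nonneg x)
      rwa [← Real.exp_add, add_neg_cancel, Real.exp_zero] at this
    nlinarith [Real.exp_pos x]
  · have h1 : Real.exp x < 1 := by simpa using Real.exp_lt_exp.mpr hx
    rw [abs_of_nonpos (by linarith), abs_of_neg hx]
    have h2 : 1 + x ≤ Real.exp x := by have := Real.add_one_le_exp x; linarith
    have h3 : (1:ℝ) ≤ Real.exp (-x) := Real.one_le_exp (by linarith)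
    nlinarith

lemma lintegral_abs_exp_affine_sub_one_le {Ω : Type*} [MeasureSpace Ω]
    [IsProbabilityMeasure (ℙ : Measure Ω)] {X : Ω → ℝ} (hX : Measurable X)
    {v : ℝ≥0} (hmap : Measure.map X ℙ = gaussianReal 0 v) (a b : ℝ) :
    ∫⁻ ω, ENNReal.ofReal |Real.exp (a * X ω + b) - 1| ∂ℙ
      ≤ ENNReal.ofReal (Real.sqrt
          (Real.exp (2 * a ^ 2 * v + 2 * b) - 2 * Real.exp (a ^ 2 * v / 2 + b) + 1)) := by
  set α : ℝ := 2 * a ^ 2 * v + 2 * b with hα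
  set β : ℝ := a ^ 2 * v / 2 + b with hβ
  have hG0 : 0 ≤ Real.exp α - 2 * Real.exp β + 1 := by
    have h1 : Real.exp β ≤ Real.exp (α / 2) := Real.exp_le_exp.mpr (by rw [hα, hβ]; nlinarith [sq_nonneg a, NNReal.coe_nonneg v])
    have h2 : Real.exp (α/2) * Real.exp (α/2) = Real.exp α := by rw [← Real.exp_add]; ring_nf
    nlinarith [Real.exp_pos (α/2), Real.exp_pos β, sq_nonneg (Real.exp (α/2) - 1)]
  have hg : Measurable fun ω => ENNReal.ofReal |Real.exp (a * X ω + b) - 1| := by fun_prop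
  -- Cauchy-Schwarz
  have hconj : Real.HolderConjugate 2 2 := by rw [Real.holderConjugate_iff]; norm_num
  have hCS := ENNReal.lintegral_mul_le_Lp_mul_Lq ℙ hconj hg.aemeasurable
      (aemeasurable_const (b := (1:ℝ≥0∞)))
  simp only [Pi.mul_apply, mul_one, ENNReal.one_rpow, lintegral_const, measure_univ,
    one_mul] at hCS
  -- compute the second moment
  have hsq : ∀ ω, (ENNReal.ofReal |Real.exp (a * X ω + b) - 1|) ^ (2:ℝ)
      = ENNReal.ofReal ((Real.exp (a * X ω + b) - 1) ^ 2) := by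
    intro ω
    rw [ENNReal.ofReal_rpow_of_nonneg (abs_nonneg _) (by norm_num)]
    congr 1
    rw [Real.rpow_two, sq_abs]
  have hkey : ∫⁻ ω, (ENNReal.ofReal |Real.exp (a * X ω + b) - 1|) ^ (2:ℝ) ∂ℙ
      ≤ ENNReal.ofReal (Real.exp α - 2 * Real.exp β + 1) := by
    simp_rw [hsq]
    have hid : ∀ ω, ENNReal.ofReal ((Real.exp (a * X ω + b) - 1) ^ 2)
        + ENNReal.ofReal (2 * Real.exp (a * X ω + b))
        = ENNReal.ofReal (Real.exp (2 * a * X ω + 2 * b)) + 1 := by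
      intro ω
      rw [← ENNReal.ofReal_add (by positivity) (by positivity), ← ENNReal.ofReal_one,
        ← ENNReal.ofReal_add (Real.exp_nonneg _) (by norm_num)]
      congr 1
      have : Real.exp (2 * a * X ω + 2 * b)
          = Real.exp (a * X ω + b) * Real.exp (a * X ω + b) := by
        rw [← Real.exp_add]; ring_nf
      rw [this]; ring
    have hsum : (∫⁻ ω, ENNReal.ofReal ((Real.exp (a * X ω + b) - 1) ^ 2) ∂ℙ)
        + ∫⁻ ω, ENNReal.ofReal (2 * Real.exp (a * X ω + b)) ∂ℙ
        = ENNReal.ofReal (Real.exp α) + 1 := by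
      rw [← lintegral_add_left (by fun_prop)]
      simp_rw [hid]
      rw [lintegral_add_right _ measurable_const, lintegral_const, measure_univ, mul_one]
      congr 2
      have := lintegral_exp_affine hX hmap (2*a) (2*b)
      rw [this]
      congr 2
      rw [hα]; ring
    have h2e : ∫⁻ ω, ENNReal.ofReal (2 * Real.exp (a * X ω + b)) ∂ℙ
        = ENNReal.ofReal (2 * Real.exp β) := by
      simp_rw [ENNReal.ofReal_mul (by norm_num : (0:ℝ) ≤ 2)]
      rw [lintegral_const_mul _ (by fun_prop), lintegral_exp_affine hX hmap a b, hβ]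
    rw [h2e] at hsum
    have hfin : ENNReal.ofReal (2 * Real.exp β) ≠ ⊤ := ENNReal.ofReal_ne_top
    have : ∫⁻ ω, ENNReal.ofReal ((Real.exp (a * X ω + b) - 1) ^ 2) ∂ℙ
        = (ENNReal.ofReal (Real.exp α) + 1) - ENNReal.ofReal (2 * Real.exp β) :=
      ENNReal.eq_sub_of_add_eq hfin hsum
    rw [this, tsub_le_iff_right, ← ENNReal.ofReal_add hG0 (by positivity), ← ENNReal.ofReal_one,
      ← ENNReal.ofReal_add (Real.exp_nonneg _) (by norm_num)]
    apply ENNReal.ofReal_le_ofReal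
    ring_nf
    exact le_refl _
  calc ∫⁻ ω, ENNReal.ofReal |Real.exp (a * X ω + b) - 1| ∂ℙ
      ≤ (∫⁻ ω, (ENNReal.ofReal |Real.exp (a * X ω + b) - 1|) ^ (2:ℝ) ∂ℙ) ^ (1/2 : ℝ) := hCS
    _ ≤ (ENNReal.ofReal (Real.exp α - 2 * Real.exp β + 1)) ^ (1/2 : ℝ) := by
        exact ENNReal.rpow_le_rpow hkey (by norm_num)
    _ = ENNReal.ofReal (Real.sqrt (Real.exp α - 2 * Real.exp β + 1)) := by
        rw [ENNReal.ofReal_rpow_of_nonneg hG0 (by norm_num), Real.sqrt_eq_rpow]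

lemma riemann_bound {τ : ℝ} (hτ : 0 < τ) {g : ℝ → ℝ} (hgc : Continuous g)
    (hg0 : ∀ t, 0 ≤ g t) (hsum : Summable fun i : ℕ => g (i * τ))
    (hint : IntegrableOn g (Set.Ioi 0)) :
    ENNReal.ofReal |τ * ∑' i : ℕ, g (i * τ) - ∫ t in Set.Ioi (0:ℝ), g t|
      ≤ ∑' i : ℕ, ∫⁻ t in Set.Ioc ((i:ℝ) * τ) (((i:ℝ)+1) * τ),
          ENNReal.ofReal |g (i * τ) - g t| := by
  have hUnion : Set.Ioi (0:ℝ) = ⋃ i : ℕ, Set.Ioc ((i:ℝ)*τ) (((i:ℝ)+1)*τ) := by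
    ext x
    simp only [Set.mem_Ioi, Set.mem_iUnion, Set.mem_Ioc]
    constructor
    · intro hx
      set n := ⌈x/τ⌉₊ with hn
      have hn1 : 1 ≤ n := Nat.one_le_ceil_iff.mpr (div_pos hx hτ)
      refine ⟨n - 1, ?_, ?_⟩
      · have h1 : ((n-1 : ℕ) : ℝ) < x / τ := Nat.lt_ceil.mp (by omega)
        calc ((n-1 : ℕ) : ℝ) * τ < (x/τ) * τ := by
              exact mul_lt_mul_of_pos_right h1 hτ
          _ = x := div_mul_cancel₀ x hτ.ne'
      · have h2 : x / τ ≤ n := Nat.le_ceil _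
        have h3 : ((n-1 : ℕ) : ℝ) + 1 = (n : ℝ) := by
          rw [Nat.cast_sub hn1]; ring
        rw [h3]
        calc x = (x/τ) * τ := (div_mul_cancel₀ x hτ.ne').symm
          _ ≤ (n:ℝ) * τ := mul_le_mul_of_nonneg_right h2 hτ.le
    · rintro ⟨i, h1, _⟩
      exact lt_of_le_of_lt (by positivity) h1
  have hmeas : ∀ i : ℕ, MeasurableSet (Set.Ioc ((i:ℝ)*τ) (((i:ℝ)+1)*τ)) :=
    fun i => measurableSet_Ioc
  have hdisj : Pairwise (Function.onFun Disjoint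
      fun i : ℕ => Set.Ioc ((i:ℝ)*τ) (((i:ℝ)+1)*τ)) := by
    intro i j hij
    rcases lt_or_gt_of_ne hij with h | h
    · refine Set.Ioc_disjoint_Ioc.mpr ?_
      have : ((i:ℝ)+1) ≤ (j:ℝ) := by exact_mod_cast Nat.succ_le_of_lt h
      refine le_trans (min_le_left _ _) (le_trans ?_ (le_max_right _ _))
      exact mul_le_mul_of_nonneg_right this hτ.le
    · refine Set.Ioc_disjoint_Ioc.mpr ?_
      have : ((j:ℝ)+1) ≤ (i:ℝ) := by exact_mod_cast Nat.succ_le_of_lt h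
      refine le_trans (min_le_right _ _) (le_trans ?_ (le_max_left _ _))
      exact mul_le_mul_of_nonneg_right this hτ.le
  have hsubset : ∀ i : ℕ, Set.Ioc ((i:ℝ)*τ) (((i:ℝ)+1)*τ) ⊆ Set.Ioi (0:ℝ) :=
    fun i x hx => lt_of_le_of_lt (by positivity) hx.1
  have hgInt : ∀ i : ℕ, IntegrableOn g (Set.Ioc ((i:ℝ)*τ) (((i:ℝ)+1)*τ)) :=
    fun i => hint.mono_set (hsubset i)
  have hS2 : HasSum (fun i : ℕ => ∫ t in Set.Ioc ((i:ℝ)*τ) (((i:ℝ)+1)*τ), g t)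
      (∫ t in Set.Ioi (0:ℝ), g t) := by
    have := hasSum_integral_iUnion hmeas hdisj (hUnion ▸ hint)
    rwa [← hUnion] at this
  have hvol : ∀ i : ℕ, (volume (Set.Ioc ((i:ℝ)*τ) (((i:ℝ)+1)*τ))).toReal = τ := by
    intro i
    rw [Real.volume_Ioc, ENNReal.toReal_ofReal (by ring_nf; linarith)]
    ring
  have hconstInt : ∀ i : ℕ,
      IntegrableOn (fun _ : ℝ => g ((i:ℝ)*τ)) (Set.Ioc ((i:ℝ)*τ) (((i:ℝ)+1)*τ)) :=
    fun i => integrableOn_const measure_Ioc_lt_top.ne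
  have hconst : ∀ i : ℕ,
      ∫ _ in Set.Ioc ((i:ℝ)*τ) (((i:ℝ)+1)*τ), g ((i:ℝ)*τ) = τ * g ((i:ℝ)*τ) := by
    intro i
    rw [setIntegral_const, measureReal_def, hvol i, smul_eq_mul]
  have hS1 : HasSum (fun i : ℕ => τ * g ((i:ℝ)*τ)) (τ * ∑' i : ℕ, g ((i:ℝ)*τ)) :=
    hsum.hasSum.mul_left τ
  have hS3 : HasSum (fun i : ℕ => τ * g ((i:ℝ)*τ) - ∫ t in Set.Ioc ((i:ℝ)*τ) (((i:ℝ)+1)*τ), g t)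
      (τ * ∑' i : ℕ, g ((i:ℝ)*τ) - ∫ t in Set.Ioi (0:ℝ), g t) := hS1.sub hS2
  set a : ℕ → ℝ := fun i => τ * g ((i:ℝ)*τ) - ∫ t in Set.Ioc ((i:ℝ)*τ) (((i:ℝ)+1)*τ), g t
    with ha
  set b : ℕ → ℝ := fun i => ∫ t in Set.Ioc ((i:ℝ)*τ) (((i:ℝ)+1)*τ), |g ((i:ℝ)*τ) - g t| with hb
  have habsInt : ∀ i : ℕ, IntegrableOn (fun t => |g ((i:ℝ)*τ) - g t|)
      (Set.Ioc ((i:ℝ)*τ) (((i:ℝ)+1)*τ)) := fun i => ((hconstInt i).sub (hgInt i)).abs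
  have hab : ∀ i : ℕ, ‖a i‖ ≤ b i := by
    intro i
    rw [ha]
    simp only
    rw [← hconst i, ← integral_sub (hconstInt i) (hgInt i)]
    exact (norm_integral_le_integral_norm _).trans (le_of_eq (by simp [Real.norm_eq_abs, hb]))
  have hbig : ∀ i : ℕ, b i ≤ τ * g ((i:ℝ)*τ) + ∫ t in Set.Ioc ((i:ℝ)*τ) (((i:ℝ)+1)*τ), g t := by
    intro i
    rw [hb]
    simp only
    rw [← hconst i, ← integral_add (hconstInt i) (hgInt i)]
    refine integral_mono (habsInt i) ((hconstInt i).add (hgInt i)) (fun t => ?_)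
    calc |g ((i:ℝ)*τ) - g t| ≤ |g ((i:ℝ)*τ)| + |g t| := abs_sub _ _
      _ = g ((i:ℝ)*τ) + g t := by rw [abs_of_nonneg (hg0 _), abs_of_nonneg (hg0 _)]
  have hbigSummable : Summable fun i : ℕ =>
      τ * g ((i:ℝ)*τ) + ∫ t in Set.Ioc ((i:ℝ)*τ) (((i:ℝ)+1)*τ), g t :=
    (hsum.mul_left τ).add hS2.summable
  have hb0 : ∀ i : ℕ, 0 ≤ b i := fun i => integral_nonneg (fun t => abs_nonneg _)
  have hbSummable : Summable b :=
    Summable.of_nonneg_of_le hb0 hbig hbigSummable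
  have haSummable : Summable fun i => ‖a i‖ :=
    Summable.of_nonneg_of_le (fun i => norm_nonneg _) (fun i => (hab i).trans (hbig i))
      hbigSummable
  have hreal : |τ * ∑' i : ℕ, g ((i:ℝ) * τ) - ∫ t in Set.Ioi (0:ℝ), g t| ≤ ∑' i, b i := by
    rw [← hS3.tsum_eq, ← Real.norm_eq_abs]
    exact (norm_tsum_le_tsum_norm haSummable).trans (Summable.tsum_le_tsum hab haSummable hbSummable)
  calc ENNReal.ofReal |τ * ∑' i : ℕ, g ((i:ℝ) * τ) - ∫ t in Set.Ioi (0:ℝ), g t|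
      ≤ ENNReal.ofReal (∑' i, b i) := ENNReal.ofReal_le_ofReal hreal
    _ = ∑' i, ENNReal.ofReal (b i) := ENNReal.ofReal_tsum_of_nonneg hb0 hbSummable
    _ = ∑' i : ℕ, ∫⁻ t in Set.Ioc ((i:ℝ) * τ) (((i:ℝ)+1) * τ),
          ENNReal.ofReal |g ((i:ℝ) * τ) - g t| := by
        refine tsum_congr (fun i => ?_)
        rw [hb]
        exact ofReal_integral_eq_lintegral_ofReal (habsInt i)
          (Filter.Eventually.of_forall (fun t => abs_nonneg _))

/-- A standard Brownian motion on a probability space: starts at `0`, has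
continuous paths, Gaussian increments `W_t - W_s ~ N(0, t-s)`, and independent
increments over disjoint ordered time intervals. -/
def IsStdBrownianMotion {Ω : Type*} [MeasureSpace Ω] (W : ℝ → Ω → ℝ) : Prop :=
  (∀ ω, W 0 ω = 0) ∧
  (∀ ω, Continuous fun t => W t ω) ∧
  (∀ t, Measurable (W t)) ∧
  (∀ s t : ℝ, 0 ≤ s → s ≤ t →
    Measure.map (fun ω => W t ω - W s ω) ℙ
      = gaussianReal 0 (Real.toNNReal (t - s))) ∧
  (∀ n : ℕ, ∀ t : ℕ → ℝ, Monotone t → 0 ≤ t 0 →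
    iIndepFun
      (fun i : Fin n => fun ω => W (t (i + 1)) ω - W (t i) ω) ℙ)


set_option maxHeartbeats 2000000 in
/-- If `m < 0`, the Riemann sum `τ ∑_{i=1}^{∞} exp(σ W_{t_{i-1}} + (m-σ²/2) t_{i-1})`
converges in `L¹` to `∫₀^∞ exp(σ W_t + (m-σ²/2) t) dt` as `τ → 0⁺`. -/
theorem stmt8 {Ω : Type*} [MeasureSpace Ω] [IsProbabilityMeasure (ℙ : Measure Ω)]
    (W : ℝ → Ω → ℝ) (hW : IsStdBrownianMotion W)
    (σ m : ℝ) (hm : m < 0) :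
    Filter.Tendsto
      (fun τ : ℝ => ∫ ω,
        |τ * ∑' i : ℕ,
            Real.exp (σ * W ((i : ℝ) * τ) ω + (m - σ ^ 2 / 2) * ((i : ℝ) * τ))
          - ∫ t in Set.Ioi (0 : ℝ), Real.exp (σ * W t ω + (m - σ ^ 2 / 2) * t)| ∂ℙ)
      (nhdsWithin 0 (Set.Ioi 0)) (nhds 0) := by
  obtain ⟨hW0, hWcont, hWmeas, hWgauss, hWindep⟩ := hW
  set c : ℝ := m - σ ^ 2 / 2 with hc
  set f : ℝ → Ω → ℝ := fun t ω => Real.exp (σ * W t ω + c * t) with hf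
  -- measurability facts
  have hWj : Measurable (Function.uncurry W) :=
    measurable_uncurry_of_continuous_of_measurable hWcont hWmeas
  have hfj : Measurable fun p : ℝ × Ω => f p.1 p.2 := by
    simp only [hf]
    have : (fun p : ℝ × Ω => Real.exp (σ * W p.1 p.2 + c * p.1))
        = fun p : ℝ × Ω => Real.exp (σ * Function.uncurry W p + c * p.1) := rfl
    rw [this]
    exact ((hWj.const_mul σ).add (measurable_fst.const_mul c)).exp
  have hfswap : Measurable fun p : Ω × ℝ => f p.2 p.1 := by
    simp only [hf]
    have e : (fun p : Ω × ℝ => Real.exp (σ * W p.2 p.1 + c * p.2))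
        = fun p : Ω × ℝ => Real.exp (σ * Function.uncurry W (Prod.swap p) + c * p.2) := rfl
    rw [e]
    exact (((hWj.comp measurable_swap).const_mul σ).add (measurable_snd.const_mul c)).exp
  have hftm : ∀ t, Measurable (f t) := by
    intro t
    simp only [hf]
    exact (((hWmeas t).const_mul σ).add_const (c * t)).exp
  have hftc : ∀ ω, Continuous fun t => f t ω := by
    intro ω
    simp only [hf]
    exact ((continuous_const.mul (hWcont ω)).add (continuous_const.mul continuous_id')).rexp
  have hf0 : ∀ t ω, 0 ≤ f t ω := by
    intro t ω; rw [hf]; positivity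
  -- law of W s
  have hmapWs : ∀ s : ℝ, 0 ≤ s → Measure.map (W s) ℙ = gaussianReal 0 s.toNNReal := by
    intro s hs
    have h := hWgauss 0 s le_rfl hs
    have e : (fun ω => W s ω - W 0 ω) = W s := funext fun ω => by rw [hW0 ω, sub_zero]
    rw [e] at h
    simpa using h
  -- mean of f s
  have hEmean : ∀ s : ℝ, 0 ≤ s →
      ∫⁻ ω, ENNReal.ofReal (f s ω) ∂ℙ = ENNReal.ofReal (Real.exp (m * s)) := by
    intro s hs
    have h := lintegral_exp_affine (hWmeas s) (hmapWs s hs) σ (c * s)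
    rw [hf]
    simp only
    rw [h]
    congr 1
    rw [Real.coe_toNNReal s hs, hc]
    ring
  -- one-step estimate
  have hstep : ∀ s t : ℝ, 0 ≤ s → s ≤ t →
      ∫⁻ ω, ENNReal.ofReal |f s ω - f t ω| ∂ℙ
        ≤ ENNReal.ofReal (Real.exp (m * s)) * ENNReal.ofReal (Real.sqrt
            (Real.exp ((2*m + σ^2) * (t - s)) - 2 * Real.exp (m * (t - s)) + 1)) := by
    intro s t hs hst
    set u : ℝ := t - s with hu
    have hu0 : 0 ≤ u := by simp [hu]; linarith
    set Y : Ω → ℝ := fun ω => W t ω - W s ω with hY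
    have hYmeas : Measurable Y := (hWmeas t).sub (hWmeas s)
    have hYmap : Measure.map Y ℙ = gaussianReal 0 u.toNNReal := hWgauss s t hs hst
    have hindep : IndepFun (W s) Y ℙ := by
      set ts : ℕ → ℝ := fun k => if k = 0 then 0 else if k = 1 then s else t with hts
      have hmono : Monotone ts := by
        apply monotone_nat_of_le_succ
        intro n
        match n with
        | 0 => simpa [hts] using hs
        | 1 => simpa [hts] using hst
        | (k+2) => simp [hts]
      have h0 : (0:ℝ) ≤ ts 0 := by simp [hts]
      have hii := hWindep 2 ts hmono h0
      have h01 := hii.indepFun (i := (0 : Fin 2)) (j := (1 : Fin 2)) (by decide)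
      have e1 : (fun ω => W (ts ((0 : Fin 2) + 1)) ω - W (ts (0 : Fin 2)) ω) = W s := by
        funext ω
        norm_num [hts, hW0 ω]
      have e2 : (fun ω => W (ts ((1 : Fin 2) + 1)) ω - W (ts (1 : Fin 2)) ω) = Y := by
        funext ω
        norm_num [hts, hY]
      rwa [e1, e2] at h01
    have hind2 : IndepFun (fun ω => ENNReal.ofReal (f s ω))
        (fun ω => ENNReal.ofReal |Real.exp (σ * Y ω + c * u) - 1|) ℙ := by
      have := hindep.comp (φ := fun x : ℝ => ENNReal.ofReal (Real.exp (σ * x + c * s)))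
        (ψ := fun x : ℝ => ENNReal.ofReal |Real.exp (σ * x + c * u) - 1|)
        (by fun_prop) (by fun_prop)
      exact this
    have hfact : ∀ ω, ENNReal.ofReal |f s ω - f t ω|
        = ENNReal.ofReal (f s ω) * ENNReal.ofReal |Real.exp (σ * Y ω + c * u) - 1| := by
      intro ω
      rw [← ENNReal.ofReal_mul (hf0 s ω)]
      congr 1
      have hexp : f t ω = f s ω * Real.exp (σ * Y ω + c * u) := by
        rw [hf]
        simp only
        rw [← Real.exp_add]
        congr 1
        rw [hY, hu]
        ring
      have : f s ω - f t ω = -(f s ω * (Real.exp (σ * Y ω + c * u) - 1)) := by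
        rw [hexp]; ring
      rw [this, abs_neg, abs_mul, abs_of_nonneg (hf0 s ω)]
    calc ∫⁻ ω, ENNReal.ofReal |f s ω - f t ω| ∂ℙ
        = ∫⁻ ω, ENNReal.ofReal (f s ω)
            * ENNReal.ofReal |Real.exp (σ * Y ω + c * u) - 1| ∂ℙ := by
          exact lintegral_congr hfact
      _ = (∫⁻ ω, ENNReal.ofReal (f s ω) ∂ℙ)
            * ∫⁻ ω, ENNReal.ofReal |Real.exp (σ * Y ω + c * u) - 1| ∂ℙ :=
          lintegral_mul_eq_lintegral_mul_lintegral_of_indepFun''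
            ((hftm s).ennreal_ofReal).aemeasurable (by fun_prop) hind2
      _ ≤ ENNReal.ofReal (Real.exp (m * s)) * ENNReal.ofReal (Real.sqrt
            (Real.exp ((2*m + σ^2) * u) - 2 * Real.exp (m * u) + 1)) := by
          rw [hEmean s hs]
          refine mul_le_mul_right ?_ _
          have h := lintegral_abs_exp_affine_sub_one_le hYmeas hYmap σ (c * u)
          have e1 : 2 * σ^2 * (u.toNNReal : ℝ) + 2 * (c * u) = (2*m + σ^2) * u := by
            rw [Real.coe_toNNReal u hu0, hc]; ring
          have e2 : σ^2 * (u.toNNReal : ℝ) / 2 + c * u = m * u := by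
            rw [Real.coe_toNNReal u hu0, hc]; ring
          rwa [e1, e2] at h
  
  -- constant K and the sqrt-argument bound
  set K : ℝ := |2*m + σ^2| * Real.exp |2*m + σ^2| + 2 * |m| * Real.exp |m| with hK
  have hK0 : 0 ≤ K := by rw [hK]; positivity
  have hGle : ∀ u τ' : ℝ, 0 ≤ u → u ≤ τ' → τ' ≤ 1 →
      Real.exp ((2*m + σ^2) * u) - 2 * Real.exp (m * u) + 1 ≤ K * τ' := by
    intro u τ' hu huτ hτ1
    have hu1 : u ≤ 1 := le_trans huτ hτ1
    have h1 : Real.exp ((2*m + σ^2) * u) - 1 ≤ (|2*m + σ^2| * Real.exp |2*m + σ^2|) * u := by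
      have habs := abs_exp_sub_one_le' ((2*m + σ^2) * u)
      have e1 : |(2*m + σ^2) * u| = |2*m + σ^2| * u := by rw [abs_mul, abs_of_nonneg hu]
      have e2 : Real.exp (|2*m + σ^2| * u) ≤ Real.exp |2*m + σ^2| :=
        Real.exp_le_exp.mpr (by nlinarith [abs_nonneg (2*m + σ^2)])
      have h3 : Real.exp ((2*m + σ^2)*u) - 1 ≤ |Real.exp ((2*m + σ^2)*u) - 1| := le_abs_self _
      rw [e1] at habs
      have e3 : |2*m + σ^2| * u * Real.exp (|2*m + σ^2| * u)
          ≤ |2*m + σ^2| * u * Real.exp |2*m + σ^2| :=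
        mul_le_mul_of_nonneg_left e2 (by positivity)
      have e4 : |2*m + σ^2| * u * Real.exp |2*m + σ^2|
          = (|2*m + σ^2| * Real.exp |2*m + σ^2|) * u := by ring
      linarith
    have h2 : 1 - Real.exp (m * u) ≤ (|m| * Real.exp |m|) * u := by
      have habs := abs_exp_sub_one_le' (m * u)
      have e1 : |m * u| = |m| * u := by rw [abs_mul, abs_of_nonneg hu]
      have e2 : Real.exp (|m| * u) ≤ Real.exp |m| :=
        Real.exp_le_exp.mpr (by nlinarith [abs_nonneg m])
      have h3 : 1 - Real.exp (m*u) ≤ |Real.exp (m*u) - 1| := by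
        rw [abs_sub_comm]; exact le_abs_self _
      rw [e1] at habs
      have e3 : |m| * u * Real.exp (|m| * u) ≤ |m| * u * Real.exp |m| :=
        mul_le_mul_of_nonneg_left e2 (by positivity)
      have e4 : |m| * u * Real.exp |m| = (|m| * Real.exp |m|) * u := by ring
      linarith
    have h4 : Real.exp ((2*m + σ^2)*u) - 2*Real.exp (m*u) + 1 ≤ K * u := by rw [hK]; nlinarith
    have h5 : K * u ≤ K * τ' := mul_le_mul_of_nonneg_left huτ hK0
    linarith
  have hexp_lt_one : ∀ τ : ℝ, 0 < τ → Real.exp (m * τ) < 1 := by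
    intro τ hτ
    rw [← Real.exp_zero]
    exact Real.exp_lt_exp.mpr (by nlinarith)
  -- main per-τ estimate
  have hmain : ∀ τ : ℝ, 0 < τ → τ ≤ 1 →
      (∫ ω, |τ * ∑' i : ℕ, f ((i:ℝ) * τ) ω - ∫ t in Set.Ioi (0:ℝ), f t ω| ∂ℙ)
        ≤ Real.sqrt (K * τ) * ((1 - m * τ) / (-m)) := by
    intro τ hτ hτ1
    have hsum_meas : ∀ i : ℕ, Measurable fun ω => ENNReal.ofReal (f ((i:ℝ)*τ) ω) :=
      fun i => (hftm _).ennreal_ofReal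
    have htsum_lint : ∫⁻ ω, ∑' i : ℕ, ENNReal.ofReal (f ((i:ℝ)*τ) ω) ∂ℙ
        = ∑' i : ℕ, ENNReal.ofReal (Real.exp (m * ((i:ℝ)*τ))) := by
      rw [lintegral_tsum (fun i => (hsum_meas i).aemeasurable)]
      exact tsum_congr fun i => hEmean _ (by positivity)
    have hgeom : ∑' i : ℕ, ENNReal.ofReal (Real.exp (m * ((i:ℝ)*τ)))
        = (1 - ENNReal.ofReal (Real.exp (m*τ)))⁻¹ := by
      rw [← ENNReal.tsum_geometric]
      refine tsum_congr fun i => ?_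
      rw [← ENNReal.ofReal_pow (Real.exp_nonneg _), ← Real.exp_nat_mul]
      congr 1
      ring
    have hr1 : ENNReal.ofReal (Real.exp (m*τ)) < 1 := by
      rw [← ENNReal.ofReal_one]
      exact (ENNReal.ofReal_lt_ofReal_iff (by norm_num)).mpr (hexp_lt_one τ hτ)
    have hgeom_ne : (1 - ENNReal.ofReal (Real.exp (m*τ)))⁻¹ ≠ ⊤ := by
      rw [ENNReal.inv_ne_top, Ne, tsub_eq_zero_iff_le]
      exact not_le.mpr hr1
    have hae_sum : ∀ᵐ ω ∂ℙ, Summable fun i : ℕ => f ((i:ℝ)*τ) ω := by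
      have hfin : ∫⁻ ω, ∑' i : ℕ, ENNReal.ofReal (f ((i:ℝ)*τ) ω) ∂ℙ ≠ ⊤ := by
        rw [htsum_lint, hgeom]; exact hgeom_ne
      filter_upwards [ae_lt_top (Measurable.ennreal_tsum hsum_meas) hfin] with ω hω
      have hsum' := ENNReal.summable_toReal hω.ne
      exact hsum'.congr fun i => ENNReal.toReal_ofReal (hf0 _ _)
    -- a.e. integrability on Ioi 0
    have hswapmeas : Measurable fun p : Ω × ℝ => ENNReal.ofReal (f p.2 p.1) :=
      hfswap.ennreal_ofReal
    have hinner_meas : Measurable fun ω => ∫⁻ t in Set.Ioi (0:ℝ), ENNReal.ofReal (f t ω) :=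
      Measurable.lintegral_prod_right' hswapmeas
    have hswap_int : ∫⁻ ω, ∫⁻ t in Set.Ioi (0:ℝ), ENNReal.ofReal (f t ω) ∂ℙ
        = ∫⁻ t in Set.Ioi (0:ℝ), ∫⁻ ω, ENNReal.ofReal (f t ω) ∂ℙ :=
      lintegral_lintegral_swap hswapmeas.aemeasurable
    have hexp_int : IntegrableOn (fun t => Real.exp (m * t)) (Set.Ioi (0:ℝ)) volume := by
      have h := exp_neg_integrableOn_Ioi 0 (b := -m) (by linarith)
      refine h.congr_fun (fun t _ => ?_) measurableSet_Ioi
      norm_num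
    have hfin2 : ∫⁻ t in Set.Ioi (0:ℝ), ∫⁻ ω, ENNReal.ofReal (f t ω) ∂ℙ ≠ ⊤ := by
      rw [setLIntegral_congr_fun measurableSet_Ioi
        (fun t (ht : t ∈ Set.Ioi (0:ℝ)) => hEmean t (le_of_lt ht))]
      exact hexp_int.lintegral_lt_top.ne
    have hae_int : ∀ᵐ ω ∂ℙ, IntegrableOn (fun t => f t ω) (Set.Ioi (0:ℝ)) volume := by
      have hfin1 : ∫⁻ ω, ∫⁻ t in Set.Ioi (0:ℝ), ENNReal.ofReal (f t ω) ∂ℙ ≠ ⊤ := by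
        rw [hswap_int]; exact hfin2
      filter_upwards [ae_lt_top hinner_meas hfin1] with ω hω
      refine ⟨((hftc ω).aestronglyMeasurable), ?_⟩
      rw [hasFiniteIntegral_iff_ofReal (ae_of_all _ fun t => hf0 t ω)]
      exact hω
    -- measurability of the difference
    have hDmeas : AEStronglyMeasurable
        (fun ω => τ * ∑' i : ℕ, f ((i:ℝ)*τ) ω - ∫ t in Set.Ioi (0:ℝ), f t ω) ℙ := by
      refine AEStronglyMeasurable.sub ?_ ?_
      · refine Measurable.aestronglyMeasurable ?_
        have e : (fun ω => τ * ∑' i : ℕ, f ((i:ℝ)*τ) ω)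
            = fun ω => τ * (∑' i : ℕ, ENNReal.ofReal (f ((i:ℝ)*τ) ω)).toReal := by
          funext ω
          congr 1
          rw [ENNReal.tsum_toReal_eq (fun i => ENNReal.ofReal_ne_top)]
          exact tsum_congr fun i => (ENNReal.toReal_ofReal (hf0 _ _)).symm
        rw [e]
        exact ((Measurable.ennreal_tsum hsum_meas).ennreal_toReal).const_mul τ
      · exact (StronglyMeasurable.integral_prod_right'
          (hfswap.stronglyMeasurable)).aestronglyMeasurable
    set L : ℝ≥0∞ := ∫⁻ ω, ENNReal.ofReal
        |τ * ∑' i : ℕ, f ((i:ℝ)*τ) ω - ∫ t in Set.Ioi (0:ℝ), f t ω| ∂ℙ with hL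
    have heq : (∫ ω, |τ * ∑' i : ℕ, f ((i:ℝ)*τ) ω - ∫ t in Set.Ioi (0:ℝ), f t ω| ∂ℙ)
        = L.toReal := by
      rw [hL]
      exact integral_eq_lintegral_of_nonneg_ae (ae_of_all _ fun ω => abs_nonneg _)
        (by simpa [Real.norm_eq_abs] using hDmeas.norm)
    have hdiffmeas : ∀ i : ℕ, Measurable fun p : Ω × ℝ =>
        ENNReal.ofReal |f ((i:ℝ)*τ) p.1 - f p.2 p.1| :=
      fun i => ((((hftm _).comp measurable_fst).sub hfswap).abs).ennreal_ofReal
    have hbound1 : L ≤ ∑' i : ℕ, ∫⁻ t in Set.Ioc ((i:ℝ)*τ) (((i:ℝ)+1)*τ),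
        ∫⁻ ω, ENNReal.ofReal |f ((i:ℝ)*τ) ω - f t ω| ∂ℙ := by
      have hstep1 : L ≤ ∫⁻ ω, ∑' i : ℕ, ∫⁻ t in Set.Ioc ((i:ℝ)*τ) (((i:ℝ)+1)*τ),
          ENNReal.ofReal |f ((i:ℝ)*τ) ω - f t ω| ∂ℙ := by
        rw [hL]
        refine lintegral_mono_ae ?_
        filter_upwards [hae_sum, hae_int] with ω h1 h2
        exact riemann_bound hτ (hftc ω) (fun t => hf0 t ω) h1 h2
      refine hstep1.trans (le_of_eq ?_)
      rw [lintegral_tsum (fun i => (Measurable.lintegral_prod_right' (hdiffmeas i)).aemeasurable)]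
      exact tsum_congr fun i => lintegral_lintegral_swap (hdiffmeas i).aemeasurable
    have hinner : ∀ i : ℕ, ∀ t ∈ Set.Ioc ((i:ℝ)*τ) (((i:ℝ)+1)*τ),
        ∫⁻ ω, ENNReal.ofReal |f ((i:ℝ)*τ) ω - f t ω| ∂ℙ
          ≤ ENNReal.ofReal (Real.exp (m * ((i:ℝ)*τ))) * ENNReal.ofReal (Real.sqrt (K * τ)) := by
      intro i t ht
      have hs0 : 0 ≤ (i:ℝ)*τ := by positivity
      refine (hstep ((i:ℝ)*τ) t hs0 ht.1.le).trans ?_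
      refine mul_le_mul_right (ENNReal.ofReal_le_ofReal (Real.sqrt_le_sqrt ?_)) _
      have he : ((i:ℝ)+1)*τ = (i:ℝ)*τ + τ := by ring
      exact hGle (t - (i:ℝ)*τ) τ (by linarith [ht.1]) (by linarith [ht.2, he.le]) hτ1
    have houter : ∀ i : ℕ,
        ∫⁻ t in Set.Ioc ((i:ℝ)*τ) (((i:ℝ)+1)*τ),
            ∫⁻ ω, ENNReal.ofReal |f ((i:ℝ)*τ) ω - f t ω| ∂ℙ
          ≤ ENNReal.ofReal (Real.exp (m * ((i:ℝ)*τ)))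
            * ENNReal.ofReal (Real.sqrt (K * τ)) * ENNReal.ofReal τ := by
      intro i
      calc ∫⁻ t in Set.Ioc ((i:ℝ)*τ) (((i:ℝ)+1)*τ),
            ∫⁻ ω, ENNReal.ofReal |f ((i:ℝ)*τ) ω - f t ω| ∂ℙ
          ≤ ∫⁻ _ in Set.Ioc ((i:ℝ)*τ) (((i:ℝ)+1)*τ),
              ENNReal.ofReal (Real.exp (m * ((i:ℝ)*τ)))
                * ENNReal.ofReal (Real.sqrt (K * τ)) :=
            setLIntegral_mono' measurableSet_Ioc (hinner i)
        _ = ENNReal.ofReal (Real.exp (m * ((i:ℝ)*τ))) * ENNReal.ofReal (Real.sqrt (K * τ))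
              * volume (Set.Ioc ((i:ℝ)*τ) (((i:ℝ)+1)*τ)) := setLIntegral_const _ _
        _ = ENNReal.ofReal (Real.exp (m * ((i:ℝ)*τ)))
              * ENNReal.ofReal (Real.sqrt (K * τ)) * ENNReal.ofReal τ := by
            rw [Real.volume_Ioc]
            congr 1
            ring
    have hLle : L ≤ ENNReal.ofReal (Real.sqrt (K*τ)) * ENNReal.ofReal τ
        * (1 - ENNReal.ofReal (Real.exp (m*τ)))⁻¹ := by
      refine hbound1.trans ((ENNReal.tsum_le_tsum houter).trans (le_of_eq ?_))
      have e : ∀ i : ℕ, ENNReal.ofReal (Real.exp (m * ((i:ℝ)*τ)))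
          * ENNReal.ofReal (Real.sqrt (K * τ)) * ENNReal.ofReal τ
          = ENNReal.ofReal (Real.exp (m * ((i:ℝ)*τ)))
            * (ENNReal.ofReal (Real.sqrt (K * τ)) * ENNReal.ofReal τ) := fun i => by ring
      rw [tsum_congr e, ENNReal.tsum_mul_right, hgeom]
      ring
    have hRne : ENNReal.ofReal (Real.sqrt (K*τ)) * ENNReal.ofReal τ
        * (1 - ENNReal.ofReal (Real.exp (m*τ)))⁻¹ ≠ ⊤ :=
      ENNReal.mul_ne_top (ENNReal.mul_ne_top ENNReal.ofReal_ne_top ENNReal.ofReal_ne_top)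
        hgeom_ne
    have hsub_eq : (1 : ℝ≥0∞) - ENNReal.ofReal (Real.exp (m*τ))
        = ENNReal.ofReal (1 - Real.exp (m*τ)) := by
      rw [← ENNReal.ofReal_one, ← ENNReal.ofReal_sub _ (Real.exp_nonneg _)]
    have hd : 0 < 1 - Real.exp (m*τ) := by linarith [hexp_lt_one τ hτ]
    have htoReal : L.toReal ≤ Real.sqrt (K*τ) * τ * (1 - Real.exp (m*τ))⁻¹ := by
      have h := ENNReal.toReal_mono hRne hLle
      rwa [ENNReal.toReal_mul, ENNReal.toReal_mul, ENNReal.toReal_ofReal (Real.sqrt_nonneg _),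
        ENNReal.toReal_ofReal hτ.le, hsub_eq, ENNReal.toReal_inv,
        ENNReal.toReal_ofReal hd.le] at h
    rw [heq]
    refine htoReal.trans ?_
    have key : τ * (1 - Real.exp (m*τ))⁻¹ ≤ (1 - m*τ)/(-m) := by
      have h5 : 1 - m*τ ≤ Real.exp (-(m*τ)) := by
        have := Real.add_one_le_exp (-(m*τ)); linarith
      have h6 : Real.exp (m*τ) * Real.exp (-(m*τ)) = 1 := by
        rw [← Real.exp_add]; simp
      have h7 : Real.exp (m*τ) * (1 - m*τ) ≤ 1 := by nlinarith [Real.exp_pos (m*τ)]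
      rw [← div_eq_mul_inv, div_le_div_iff₀ hd (by linarith : (0:ℝ) < -m)]
      nlinarith
    calc Real.sqrt (K*τ) * τ * (1 - Real.exp (m*τ))⁻¹
        = Real.sqrt (K*τ) * (τ * (1 - Real.exp (m*τ))⁻¹) := by ring
      _ ≤ Real.sqrt (K*τ) * ((1 - m*τ)/(-m)) :=
          mul_le_mul_of_nonneg_left key (Real.sqrt_nonneg _)
  -- conclusion via squeeze
  show Filter.Tendsto
      (fun τ : ℝ => ∫ ω, |τ * ∑' i : ℕ, f ((i:ℝ)*τ) ω - ∫ t in Set.Ioi (0:ℝ), f t ω| ∂ℙ)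
      (nhdsWithin 0 (Set.Ioi 0)) (nhds 0)
  refine squeeze_zero' (g := fun τ : ℝ => Real.sqrt (K*τ) * ((1 - m*τ)/(-m)))
    (Filter.Eventually.of_forall fun τ => integral_nonneg fun ω => abs_nonneg _) ?_ ?_
  · filter_upwards [Ioc_mem_nhdsGT_of_mem
      (show (0:ℝ) ∈ Set.Ico (0:ℝ) 1 from ⟨le_rfl, zero_lt_one⟩)] with τ hτ'
    exact hmain τ hτ'.1 hτ'.2
  · have hcont : Continuous fun τ : ℝ => Real.sqrt (K*τ) * ((1 - m*τ)/(-m)) := by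
      refine Continuous.mul ?_ ?_
      · exact Real.continuous_sqrt.comp (continuous_const.mul continuous_id)
      · exact (continuous_const.sub (continuous_const.mul continuous_id)).div_const _
    have h0 : Real.sqrt (K*(0:ℝ)) * ((1 - m*0)/(-m)) = 0 := by
      norm_num
    exact ((hcont.tendsto' 0 0 h0)).mono_left nhdsWithin_le_nhds
end

section
/- For the geometrically stopped sum X_N (N geometric with parameter p ∈ (0,1), independent of W), lim_{ε→0} log P(X_N ≤ ε) / (log ε)² = -1/(2σ²τ). -/
open MeasureTheory ProbabilityTheory Real
open Filter Set
open scoped NNReal ENNReal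

lemma aux_integrableOn_exp_mul_Iic {a : ℝ} (ha : 0 < a) (c : ℝ) :
    IntegrableOn (fun x => Real.exp (a * x)) (Iic c) := by
  refine integrableOn_Iic_of_intervalIntegral_norm_bounded
      (a⁻¹ * Real.exp (a * c)) c
      (fun i => ((Real.continuous_exp.comp
        (continuous_const.mul continuous_id)).intervalIntegrable i c).1)
      tendsto_id ?_
  filter_upwards with i
  have h1 : (∫ x in i..c, ‖Real.exp (a * x)‖) = ∫ x in i..c, Real.exp (a * x) := by
    simp [Real.norm_eq_abs, abs_of_pos (Real.exp_pos _)]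
  rw [h1, intervalIntegral.integral_comp_mul_left (f := Real.exp) (c := a) ha.ne',
    integral_exp, smul_eq_mul]
  nlinarith [Real.exp_pos (a * i), inv_pos.mpr ha]

lemma aux_integral_exp_mul_Iic {a : ℝ} (ha : 0 < a) (c : ℝ) :
    ∫ x in Iic c, Real.exp (a * x) = a⁻¹ * Real.exp (a * c) := by
  have hder : ∀ x ∈ Iic c, HasDerivAt (fun y => a⁻¹ * Real.exp (a * y))
      (Real.exp (a * x)) x := by
    intro x _
    have h := (((hasDerivAt_id x).const_mul a).exp).const_mul a⁻¹
    refine h.congr_deriv ?_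
    simp only [id, mul_one]
    field_simp
  have htend : Tendsto (fun y => a⁻¹ * Real.exp (a * y)) atBot (nhds 0) := by
    have h1 : Tendsto (fun y : ℝ => a * y) atBot atBot := by
      exact Tendsto.const_mul_atBot ha tendsto_id
    have := (Real.tendsto_exp_atBot.comp h1).const_mul a⁻¹
    simpa using this
  rw [integral_Iic_of_hasDerivAt_of_tendsto' hder (aux_integrableOn_exp_mul_Iic ha c) htend,
    sub_zero]

lemma gauss_upper {v : ℝ≥0} (hv : 0 < (v : ℝ)) {y : ℝ} (hy : y < 0) :
    ((gaussianReal 0 v) (Iic y)).toReal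
      ≤ (Real.sqrt (2 * π * v))⁻¹ * (((v : ℝ) / (-y)) * Real.exp (-y ^ 2 / (2 * v))) := by
  have hv' : v ≠ 0 := by exact_mod_cast hv.ne'
  rw [gaussianReal_apply_eq_integral 0 hv',
    ENNReal.toReal_ofReal (setIntegral_nonneg measurableSet_Iic
      (fun x _ => gaussianPDFReal_nonneg 0 v x))]
  have ha : 0 < -y / (v : ℝ) := div_pos (neg_pos.mpr hy) hv
  set a : ℝ := -y / (v : ℝ) with ha_def
  set C : ℝ := (Real.sqrt (2 * π * v))⁻¹ with hC_def
  have hC : 0 < C := by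
    rw [hC_def]
    positivity
  have hbound : ∀ x ∈ Iic y, gaussianPDFReal 0 v x
      ≤ C * Real.exp (y ^ 2 / (2 * v)) * Real.exp (a * x) := by
    intro x _
    have hsplit : C * Real.exp (y ^ 2 / (2 * v)) * Real.exp (a * x)
        = C * Real.exp (y ^ 2 / (2 * v) + a * x) := by
      rw [Real.exp_add, mul_assoc]
    rw [gaussianPDFReal, hsplit]
    refine mul_le_mul_of_nonneg_left (Real.exp_le_exp.mpr ?_) hC.le
    have hkey : y ^ 2 / (2 * v) + a * x - (-(x - 0) ^ 2 / (2 * v))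
        = (x - y) ^ 2 / (2 * (v : ℝ)) := by
      rw [ha_def]
      field_simp
      ring
    have h2 : 0 ≤ (x - y) ^ 2 / (2 * (v : ℝ)) := by positivity
    linarith
  have hGint : IntegrableOn (gaussianPDFReal 0 v) (Iic y) :=
    (integrable_gaussianPDFReal 0 v).integrableOn
  have hBint : IntegrableOn (fun x => C * Real.exp (y ^ 2 / (2 * v)) * Real.exp (a * x))
      (Iic y) := (aux_integrableOn_exp_mul_Iic ha y).const_mul _
  have hexp : Real.exp (y ^ 2 / (2 * v)) * Real.exp (a * y) = Real.exp (-y ^ 2 / (2 * v)) := by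
    rw [← Real.exp_add]
    congr 1
    rw [ha_def]
    field_simp
    ring
  have hainv : a⁻¹ = (v : ℝ) / (-y) := by rw [ha_def, inv_div]
  calc ∫ x in Iic y, gaussianPDFReal 0 v x
      ≤ ∫ x in Iic y, C * Real.exp (y ^ 2 / (2 * v)) * Real.exp (a * x) :=
        setIntegral_mono_on hGint hBint measurableSet_Iic hbound
    _ = C * Real.exp (y ^ 2 / (2 * v)) * (a⁻¹ * Real.exp (a * y)) := by
        rw [MeasureTheory.integral_const_mul, aux_integral_exp_mul_Iic ha y]
    _ = C * (((v : ℝ) / (-y)) * Real.exp (-y ^ 2 / (2 * v))) := by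
        rw [show (C * Real.exp (y ^ 2 / (2 * v)) * (a⁻¹ * Real.exp (a * y)) : ℝ)
            = C * (a⁻¹ * (Real.exp (y ^ 2 / (2 * v)) * Real.exp (a * y))) from by ring,
          hexp, hainv]

lemma gauss_lower {v : ℝ≥0} (hv : 0 < (v : ℝ)) {y : ℝ} (hy : y ≤ 0) :
    (Real.sqrt (2 * π * v))⁻¹ * Real.exp (-(y - 1) ^ 2 / (2 * v))
      ≤ ((gaussianReal 0 v) (Iic y)).toReal := by
  have hv' : v ≠ 0 := by exact_mod_cast hv.ne'
  rw [gaussianReal_apply_eq_integral 0 hv',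
    ENNReal.toReal_ofReal (setIntegral_nonneg measurableSet_Iic
      (fun x _ => gaussianPDFReal_nonneg 0 v x))]
  set C : ℝ := (Real.sqrt (2 * π * v))⁻¹ with hC_def
  have hC : 0 < C := by rw [hC_def]; positivity
  have h1 : ∫ x in Icc (y - 1) y, gaussianPDFReal 0 v x
      ≤ ∫ x in Iic y, gaussianPDFReal 0 v x :=
    setIntegral_mono_set (integrable_gaussianPDFReal 0 v).integrableOn
      (ae_of_all _ (fun x => gaussianPDFReal_nonneg 0 v x))
      (HasSubset.Subset.eventuallyLE Icc_subset_Iic_self)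
  refine le_trans ?_ h1
  have h2 : ∀ x ∈ Icc (y - 1) y, C * Real.exp (-(y - 1) ^ 2 / (2 * v))
      ≤ gaussianPDFReal 0 v x := by
    intro x hx
    rw [gaussianPDFReal]
    refine mul_le_mul_of_nonneg_left (Real.exp_le_exp.mpr ?_) hC.le
    have hsq : (x - 0) ^ 2 ≤ (y - 1) ^ 2 := by nlinarith [hx.1, hx.2]
    have h2v : (0 : ℝ) < 2 * v := by positivity
    exact (div_le_div_iff_of_pos_right h2v).mpr (neg_le_neg hsq)
  calc C * Real.exp (-(y - 1) ^ 2 / (2 * v))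
      = ∫ _x in Icc (y - 1) y, C * Real.exp (-(y - 1) ^ 2 / (2 * v)) := by
        rw [setIntegral_const, measureReal_def, Real.volume_Icc]
        simp
    _ ≤ ∫ x in Icc (y - 1) y, gaussianPDFReal 0 v x := by
        refine setIntegral_mono_on (integrableOn_const measure_Icc_lt_top.ne)
          ((integrable_gaussianPDFReal 0 v).integrableOn) measurableSet_Icc h2

lemma sq_atBot : Tendsto (fun y : ℝ => y ^ 2) atBot atTop := by
  have h := (tendsto_pow_atTop (n := 2) (by norm_num)).comp
    (tendsto_abs_atBot_atTop (G := ℝ))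
  simpa [Function.comp_def, sq_abs] using h

lemma inv_atBot_zero : Tendsto (fun y : ℝ => y⁻¹) atBot (nhds 0) := by
  have h0 : Tendsto (fun y : ℝ => (-y)⁻¹) atBot (nhds 0) :=
    (tendsto_inv_atTop_zero (𝕜 := ℝ)).comp tendsto_neg_atBot_atTop
  have h := h0.neg
  simpa [inv_neg] using h

lemma log_div_sq_atTop : Tendsto (fun t : ℝ => Real.log t / t ^ 2) atTop (nhds 0) := by
  have h1 : Tendsto (fun t : ℝ => Real.log t / t) atTop (nhds 0) :=
    Real.isLittleO_log_id_atTop.tendsto_div_nhds_zero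
  have h2 := h1.mul tendsto_inv_atTop_zero
  rw [mul_zero] at h2
  refine h2.congr' ?_
  filter_upwards [eventually_gt_atTop (0 : ℝ)] with t ht
  rw [sq, ← div_div, div_eq_mul_inv (Real.log t / t) t]

lemma gauss_tail {v : ℝ≥0} (hv : 0 < (v : ℝ)) :
    Tendsto (fun y : ℝ => Real.log ((gaussianReal 0 v (Iic y)).toReal) / y ^ 2) atBot
      (nhds (-(1 / (2 * (v : ℝ))))) := by
  set C : ℝ := (Real.sqrt (2 * π * v))⁻¹ with hC_def
  have hC : 0 < C := by rw [hC_def]; positivity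
  -- lower bound function and its limit
  have hlow : Tendsto (fun y : ℝ => (Real.log C + -(y - 1) ^ 2 / (2 * v)) / y ^ 2) atBot
      (nhds (-(1 / (2 * (v : ℝ))))) := by
    have h1 : Tendsto (fun y : ℝ => Real.log C / y ^ 2) atBot (nhds 0) :=
      tendsto_const_nhds.div_atTop sq_atBot
    have h2 : Tendsto (fun y : ℝ => -(1 / (2 * (v : ℝ))) * ((y - 1) / y) ^ 2) atBot
        (nhds (-(1 / (2 * (v : ℝ))))) := by
      have hq : Tendsto (fun y : ℝ => (y - 1) / y) atBot (nhds 1) := by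
        have h3 : Tendsto (fun y : ℝ => 1 - y⁻¹) atBot (nhds (1 - 0)) :=
          tendsto_const_nhds.sub inv_atBot_zero
        rw [sub_zero] at h3
        refine h3.congr' ?_
        filter_upwards [eventually_lt_atBot (0 : ℝ)] with y hy
        rw [sub_div, div_self hy.ne, one_div]
      have h4 := (hq.pow 2).const_mul (-(1 / (2 * (v : ℝ))))
      simpa using h4
    have hsum := h1.add h2
    rw [zero_add] at hsum
    refine hsum.congr' ?_
    filter_upwards [eventually_lt_atBot (0 : ℝ)] with y hy
    have hy0 : y ≠ 0 := hy.ne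
    field_simp
  -- upper bound function and its limit
  have hup : Tendsto (fun y : ℝ => (Real.log (C * ((v : ℝ) / (-y))) + -y ^ 2 / (2 * v)) / y ^ 2)
      atBot (nhds (-(1 / (2 * (v : ℝ))))) := by
    have h1 : Tendsto (fun y : ℝ => Real.log (C * ((v : ℝ) / (-y))) / y ^ 2) atBot (nhds 0) := by
      have ha : Tendsto (fun y : ℝ => (Real.log C + Real.log (v : ℝ)) / y ^ 2) atBot (nhds 0) :=
        tendsto_const_nhds.div_atTop sq_atBot
      have hb : Tendsto (fun y : ℝ => Real.log (-y) / y ^ 2) atBot (nhds 0) := by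
        have h5 := log_div_sq_atTop.comp tendsto_neg_atBot_atTop
        refine h5.congr ?_
        intro y
        simp [Function.comp_def, neg_sq]
      have h6 := ha.sub hb
      rw [sub_zero] at h6
      refine h6.congr' ?_
      filter_upwards [eventually_lt_atBot (0 : ℝ)] with y hy
      have hny : (0 : ℝ) < -y := by linarith
      rw [Real.log_mul hC.ne' (by positivity), Real.log_div (by positivity) hny.ne',
        ← sub_div]
      ring_nf
    have h2 : Tendsto (fun y : ℝ => -y ^ 2 / (2 * v) / y ^ 2) atBot
        (nhds (-(1 / (2 * (v : ℝ))))) := by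
      refine tendsto_const_nhds.congr' ?_
      filter_upwards [eventually_lt_atBot (0 : ℝ)] with y hy
      have hy0 : y ≠ 0 := hy.ne
      field_simp
    have hsum := h1.add h2
    rw [zero_add] at hsum
    refine hsum.congr' ?_
    filter_upwards with y
    rw [add_div]
  -- squeeze
  refine tendsto_of_tendsto_of_tendsto_of_le_of_le' hlow hup ?_ ?_
  · filter_upwards [eventually_le_atBot (-1 : ℝ)] with y hy
    have hy0 : y ≤ 0 := hy.trans (by norm_num)
    have hpos : 0 < ((gaussianReal 0 v) (Iic y)).toReal :=
      lt_of_lt_of_le (by positivity) (gauss_lower hv hy0)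
    have hsq : (0 : ℝ) < y ^ 2 := by nlinarith
    have hnum : Real.log C + -(y - 1) ^ 2 / (2 * v)
        ≤ Real.log (((gaussianReal 0 v) (Iic y)).toReal) := by
      have := Real.log_le_log (by positivity) (gauss_lower hv hy0)
      rwa [Real.log_mul hC.ne' (Real.exp_ne_zero _), Real.log_exp] at this
    exact (div_le_div_iff_of_pos_right hsq).mpr hnum
  · filter_upwards [eventually_le_atBot (-1 : ℝ)] with y hy
    have hyneg : y < 0 := lt_of_le_of_lt hy (by norm_num)
    have hy0 : y ≤ 0 := hyneg.le
    have hpos : 0 < ((gaussianReal 0 v) (Iic y)).toReal :=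
      lt_of_lt_of_le (by positivity) (gauss_lower hv hy0)
    have hsq : (0 : ℝ) < y ^ 2 := by nlinarith
    have hnum : Real.log (((gaussianReal 0 v) (Iic y)).toReal)
        ≤ Real.log (C * ((v : ℝ) / (-y))) + -y ^ 2 / (2 * v) := by
      have h7 := Real.log_le_log hpos (gauss_upper hv hyneg)
      have hrw : C * (((v : ℝ) / (-y)) * Real.exp (-y ^ 2 / (2 * v)))
          = (C * ((v : ℝ) / (-y))) * Real.exp (-y ^ 2 / (2 * v)) := by ring
      have hCd : 0 < C * ((v : ℝ) / (-y)) := mul_pos hC (div_pos hv (by linarith))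
      rw [hrw, Real.log_mul hCd.ne' (Real.exp_ne_zero _), Real.log_exp] at h7
      exact h7
    exact (div_le_div_iff_of_pos_right hsq).mpr hnum

/-- Left-tail asymptotics of the geometrically stopped sum
`X_N = ∑_{i=1}^{N} exp(σ W_{t_i} + (m-σ²/2)t_i)`:
`lim_{ε→0⁺} log P(X_N ≤ ε) / (log ε)² = -1/(2σ²τ)`. -/
theorem stmt13 {Ω : Type*} [MeasureSpace Ω] [IsProbabilityMeasure (ℙ : Measure Ω)]
    (W : ℝ → Ω → ℝ) (hW : IsStdBrownianMotion W)
    (σ τ m p : ℝ) (hσ : 0 < σ) (hτ : 0 < τ) (hp : p ∈ Set.Ioo (0 : ℝ) 1)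
    (N : Ω → ℕ) (hNmeas : Measurable N)
    (hN : ∀ k : ℕ, 1 ≤ k →
      ℙ {ω | N ω = k} = ENNReal.ofReal ((1 - p) ^ (k - 1) * p))
    (hNindep : IndepFun N (fun ω (i : ℕ) => W ((i : ℝ) * τ) ω) ℙ)
    (XN : Ω → ℝ)
    (hXN : ∀ ω, XN ω = ∑ i ∈ Finset.range (N ω),
      Real.exp (σ * W (((i : ℝ) + 1) * τ) ω
        + (m - σ ^ 2 / 2) * (((i : ℝ) + 1) * τ))) :
    Filter.Tendsto
      (fun ε : ℝ => Real.log (ℙ {ω | XN ω ≤ ε}).toReal / (Real.log ε) ^ 2)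
      (nhdsWithin 0 (Set.Ioi 0)) (nhds (-1 / (2 * σ ^ 2 * τ))) := by
  obtain ⟨hW0, hWcont, hWmeas, hWgauss, hWindep⟩ := hW
  obtain ⟨hp0, hp1⟩ := hp
  set c : ℝ := m - σ ^ 2 / 2 with hc_def
  set v : ℝ≥0 := Real.toNNReal τ with hv_def
  have hvτ : (v : ℝ) = τ := Real.coe_toNNReal τ hτ.le
  have hv : 0 < (v : ℝ) := by rw [hvτ]; exact hτ
  set A : Ω → ℝ := fun ω => Real.exp (σ * W τ ω + c * τ) with hA_def
  -- law of W τ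
  have hmap : Measure.map (W τ) ℙ = gaussianReal 0 v := by
    have h := hWgauss 0 τ le_rfl hτ.le
    have heq : (fun ω => W τ ω - W 0 ω) = W τ := by
      funext ω; rw [hW0 ω, sub_zero]
    rw [heq] at h
    rw [h, sub_zero]
  have hWz : ∀ z : ℝ, ℙ {ω | W τ ω ≤ z} = gaussianReal 0 v (Set.Iic z) := by
    intro z
    rw [← hmap, Measure.map_apply (hWmeas τ) measurableSet_Iic]
    rfl
  -- a.e., N ≥ 1
  have hNmeas' : ∀ k : ℕ, MeasurableSet (N ⁻¹' {k + 1}) :=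
    fun k => hNmeas (measurableSet_singleton _)
  have hUnion : ℙ (⋃ k : ℕ, N ⁻¹' {k + 1}) = 1 := by
    rw [measure_iUnion ?_ hNmeas']
    · have hterm : ∀ k : ℕ, ℙ (N ⁻¹' {k + 1}) = ENNReal.ofReal ((1 - p) ^ k * p) := by
        intro k
        have h := hN (k + 1) (by omega)
        simp at h
        exact h
      simp_rw [hterm]
      rw [← ENNReal.ofReal_tsum_of_nonneg (fun k => mul_nonneg (pow_nonneg (by linarith) _) hp0.le)
        ((summable_geometric_of_lt_one (by linarith) (by linarith)).mul_right p),
        tsum_mul_right, tsum_geometric_of_lt_one (by linarith) (by linarith),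
        show (1 - (1 - p))⁻¹ * p = 1 by rw [sub_sub_cancel, inv_mul_cancel₀ hp0.ne']]
      exact ENNReal.ofReal_one
    · intro i j hij
      refine Set.disjoint_left.mpr (fun ω h1 h2 => hij ?_)
      simp only [Set.mem_preimage, Set.mem_singleton_iff] at h1 h2
      omega
  have hNae : ∀ᵐ ω ∂(ℙ : Measure Ω), 0 < N ω := by
    rw [ae_iff]
    have hset : {ω | ¬ 0 < N ω} ⊆ (⋃ k : ℕ, N ⁻¹' {k + 1})ᶜ := by
      intro ω hω
      simp only [Set.mem_setOf_eq, not_lt, Nat.le_zero] at hω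
      simp only [Set.mem_compl_iff, Set.mem_iUnion, Set.mem_preimage,
        Set.mem_singleton_iff, not_exists]
      omega
    refine measure_mono_null hset ?_
    rw [measure_compl (MeasurableSet.iUnion hNmeas') (measure_ne_top _ _), hUnion,
      measure_univ, tsub_self]
  -- sandwich in ℝ≥0∞
  have hupper : ∀ ε : ℝ, ℙ {ω | XN ω ≤ ε} ≤ ℙ {ω | A ω ≤ ε} := by
    intro ε
    refine measure_mono_ae ?_
    filter_upwards [hNae] with ω hω hle
    have hterm0 : A ω ≤ XN ω := by
      rw [hXN ω]
      have h0mem : 0 ∈ Finset.range (N ω) := Finset.mem_range.mpr hω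
      have h := Finset.single_le_sum
        (f := fun i : ℕ => Real.exp (σ * W (((i : ℝ) + 1) * τ) ω + c * (((i : ℝ) + 1) * τ)))
        (fun i _ => (Real.exp_pos _).le) h0mem
      simpa using h
    exact le_trans hterm0 hle
  have hfmeas : Measurable (fun g : ℕ → ℝ => Real.exp (σ * g 1 + c * τ)) :=
    Real.measurable_exp.comp (by fun_prop)
  have hNA : IndepFun N A ℙ := by
    have h := hNindep.comp measurable_id hfmeas
    have heq : (fun g : ℕ → ℝ => Real.exp (σ * g 1 + c * τ))
        ∘ (fun ω (i : ℕ) => W ((i : ℝ) * τ) ω) = A := by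
      funext ω
      simp [Function.comp_def]
      rfl
    rwa [heq] at h
  have hlower : ∀ ε : ℝ, ENNReal.ofReal p * ℙ {ω | A ω ≤ ε} ≤ ℙ {ω | XN ω ≤ ε} := by
    intro ε
    have hsub : N ⁻¹' {1} ∩ A ⁻¹' (Set.Iic ε) ⊆ {ω | XN ω ≤ ε} := by
      rintro ω ⟨h1, h2⟩
      simp only [Set.mem_preimage, Set.mem_singleton_iff] at h1
      simp only [Set.mem_preimage, Set.mem_Iic] at h2
      have hXA : XN ω = A ω := by
        rw [hXN ω, h1, Finset.sum_range_one]
        norm_num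
        rfl
      simpa [Set.mem_setOf_eq, hXA] using h2
    have hprod := hNA.measure_inter_preimage_eq_mul (s := {1}) (t := Set.Iic ε)
      (measurableSet_singleton 1) measurableSet_Iic
    have hN1 : ℙ (N ⁻¹' {1}) = ENNReal.ofReal p := by
      have h := hN 1 le_rfl
      simp at h
      exact h
    calc ENNReal.ofReal p * ℙ {ω | A ω ≤ ε}
        = ℙ (N ⁻¹' {1} ∩ A ⁻¹' (Set.Iic ε)) := by rw [hprod, hN1]; rfl
      _ ≤ ℙ {ω | XN ω ≤ ε} := measure_mono hsub
  -- A-event as gaussian CDF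
  set Y : ℝ → ℝ := fun ε => (Real.log ε - c * τ) / σ with hY_def
  have hAset : ∀ ε : ℝ, 0 < ε →
      ℙ {ω | A ω ≤ ε} = gaussianReal 0 v (Set.Iic (Y ε)) := by
    intro ε hε
    rw [← hWz]
    congr 1
    ext ω
    simp only [Set.mem_setOf_eq, hA_def, hY_def]
    rw [← Real.le_log_iff_exp_le hε, le_div_iff₀ hσ]
    constructor <;> intro h <;> linarith
  -- limits
  have hl : Tendsto Real.log (nhdsWithin 0 (Set.Ioi 0)) atBot :=
    Real.tendsto_log_nhdsGT_zero
  have hYtend : Tendsto Y (nhdsWithin 0 (Set.Ioi 0)) atBot := by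
    have h1 : Tendsto (fun ε : ℝ => Real.log ε - c * τ) (nhdsWithin 0 (Set.Ioi 0)) atBot :=
      (tendsto_atBot_add_const_right _ (-(c * τ)) hl).congr (fun ε => by ring)
    exact h1.atBot_div_const hσ
  have hlogsq : Tendsto (fun ε : ℝ => (Real.log ε) ^ 2) (nhdsWithin 0 (Set.Ioi 0)) atTop :=
    sq_atBot.comp hl
  have hinvlog : Tendsto (fun ε : ℝ => (Real.log ε)⁻¹) (nhdsWithin 0 (Set.Ioi 0)) (nhds 0) :=
    inv_atBot_zero.comp hl
  have hlogneg : ∀ᶠ ε in nhdsWithin 0 (Set.Ioi 0), Real.log ε < 0 :=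
    hl.eventually (eventually_lt_atBot 0)
  have hYle : ∀ᶠ ε in nhdsWithin 0 (Set.Ioi 0), Y ε ≤ -1 :=
    hYtend.eventually (eventually_le_atBot (-1))
  have hr : Tendsto (fun ε : ℝ => Y ε / Real.log ε) (nhdsWithin 0 (Set.Ioi 0)) (nhds σ⁻¹) := by
    have hbase : Tendsto (fun ε : ℝ => (1 - (c * τ) * (Real.log ε)⁻¹) / σ)
        (nhdsWithin 0 (Set.Ioi 0)) (nhds ((1 - (c * τ) * 0) / σ)) :=
      (tendsto_const_nhds.sub (hinvlog.const_mul (c * τ))).div_const σ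
    rw [mul_zero, sub_zero, one_div] at hbase
    refine hbase.congr' ?_
    filter_upwards [hlogneg] with ε hε
    have hlog0 : Real.log ε ≠ 0 := hε.ne
    have h1 : 1 - c * τ * (Real.log ε)⁻¹ = (Real.log ε - c * τ) * (Real.log ε)⁻¹ := by
      rw [sub_mul (Real.log ε) (c * τ) (Real.log ε)⁻¹, mul_inv_cancel₀ hlog0]
    rw [h1, hY_def, div_div]
    ring
  have hGlim : Tendsto (fun ε : ℝ =>
      Real.log ((gaussianReal 0 v (Set.Iic (Y ε))).toReal) / (Real.log ε) ^ 2)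
      (nhdsWithin 0 (Set.Ioi 0)) (nhds (-1 / (2 * σ ^ 2 * τ))) := by
    have h1 := (gauss_tail hv).comp hYtend
    have h2 := h1.mul (hr.pow 2)
    have hval : -(1 / (2 * (v : ℝ))) * (σ⁻¹) ^ 2 = -1 / (2 * σ ^ 2 * τ) := by
      rw [hvτ]
      field_simp
    rw [hval] at h2
    refine h2.congr' ?_
    filter_upwards [hlogneg, hYle] with ε hεlog hεY
    have hY0 : Y ε ≠ 0 := by intro h; rw [h] at hεY; linarith
    have hlog0 : Real.log ε ≠ 0 := hεlog.ne
    have key : ∀ (L g yv : ℝ), yv ≠ 0 → g / yv ^ 2 * (yv / L) ^ 2 = g / L ^ 2 := by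
      intro L g yv hy
      rw [div_pow, div_mul_div_comm, mul_comm (yv ^ 2) (L ^ 2),
        mul_div_mul_right _ _ (pow_ne_zero 2 hy)]
    simp only [Function.comp_apply]
    exact key (Real.log ε) _ (Y ε) hY0
  have hzero : Tendsto (fun ε : ℝ => Real.log p / (Real.log ε) ^ 2)
      (nhdsWithin 0 (Set.Ioi 0)) (nhds 0) := tendsto_const_nhds.div_atTop hlogsq
  have hlowfn : Tendsto (fun ε : ℝ => Real.log p / (Real.log ε) ^ 2 +
      Real.log ((gaussianReal 0 v (Set.Iic (Y ε))).toReal) / (Real.log ε) ^ 2)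
      (nhdsWithin 0 (Set.Ioi 0)) (nhds (-1 / (2 * σ ^ 2 * τ))) := by
    have h := hzero.add hGlim
    rwa [zero_add] at h
  refine tendsto_of_tendsto_of_tendsto_of_le_of_le' hlowfn hGlim ?_ ?_
  · filter_upwards [hlogneg, hYle, self_mem_nhdsWithin] with ε hεlog hεY hεpos
    have hε : (0 : ℝ) < ε := hεpos
    have hYneg : Y ε ≤ 0 := by linarith
    have hGrpos : 0 < ((gaussianReal 0 v) (Set.Iic (Y ε))).toReal :=
      lt_of_lt_of_le (by positivity) (gauss_lower hv hYneg)
    have hGP : p * ((gaussianReal 0 v) (Set.Iic (Y ε))).toReal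
        ≤ (ℙ {ω | XN ω ≤ ε}).toReal := by
      have h := hlower ε
      rw [hAset ε hε] at h
      have h2 := ENNReal.toReal_mono (measure_ne_top _ _) h
      rwa [ENNReal.toReal_mul, ENNReal.toReal_ofReal hp0.le] at h2
    have hPpos : 0 < (ℙ {ω | XN ω ≤ ε}).toReal :=
      lt_of_lt_of_le (mul_pos hp0 hGrpos) hGP
    have hsq : (0 : ℝ) < (Real.log ε) ^ 2 := by nlinarith
    have hnum : Real.log p + Real.log ((gaussianReal 0 v) (Set.Iic (Y ε))).toReal
        ≤ Real.log (ℙ {ω | XN ω ≤ ε}).toReal := by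
      have h := Real.log_le_log (mul_pos hp0 hGrpos) hGP
      rwa [Real.log_mul hp0.ne' hGrpos.ne'] at h
    calc Real.log p / (Real.log ε) ^ 2
          + Real.log ((gaussianReal 0 v) (Set.Iic (Y ε))).toReal / (Real.log ε) ^ 2
        = (Real.log p + Real.log ((gaussianReal 0 v) (Set.Iic (Y ε))).toReal)
          / (Real.log ε) ^ 2 := by rw [add_div]
      _ ≤ _ := (div_le_div_iff_of_pos_right hsq).mpr hnum
  · filter_upwards [hlogneg, hYle, self_mem_nhdsWithin] with ε hεlog hεY hεpos
    have hε : (0 : ℝ) < ε := hεpos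
    have hYneg : Y ε ≤ 0 := by linarith
    have hGrpos : 0 < ((gaussianReal 0 v) (Set.Iic (Y ε))).toReal :=
      lt_of_lt_of_le (by positivity) (gauss_lower hv hYneg)
    have hGP : p * ((gaussianReal 0 v) (Set.Iic (Y ε))).toReal
        ≤ (ℙ {ω | XN ω ≤ ε}).toReal := by
      have h := hlower ε
      rw [hAset ε hε] at h
      have h2 := ENNReal.toReal_mono (measure_ne_top _ _) h
      rwa [ENNReal.toReal_mul, ENNReal.toReal_ofReal hp0.le] at h2
    have hPpos : 0 < (ℙ {ω | XN ω ≤ ε}).toReal :=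
      lt_of_lt_of_le (mul_pos hp0 hGrpos) hGP
    have hPG : (ℙ {ω | XN ω ≤ ε}).toReal
        ≤ ((gaussianReal 0 v) (Set.Iic (Y ε))).toReal := by
      have h := (hupper ε).trans_eq (hAset ε hε)
      exact ENNReal.toReal_mono (measure_ne_top _ _) h
    have hsq : (0 : ℝ) < (Real.log ε) ^ 2 := by nlinarith
    exact (div_le_div_iff_of_pos_right hsq).mpr (Real.log_le_log hPpos hPG)
end

section
/- Let A be a positive random variable with E[A^k] < 1, and let X∞ ≥ 0 satisfy X∞ = A(1+X∞) in distribution with A independent of X∞ and E[X∞^j] < ∞ for j ≤ k. Then E[X∞^k] = (E[A^k]/(1 − E[A^k])) · Σ_{j=0}^{k-1} C(k,j) E[X∞^j], and consequently E[X∞^k] = Σ over chains 0 = i₀ < i₁ < ⋯ < i_m = k of the product over j=1..m of C(i_j, i_{j-1}) · E[A^{i_j}]/(1 − E[A^{i_j}]). -/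
open MeasureTheory ProbabilityTheory Real

lemma mySortInsertMax {b : ℕ} {s : Finset ℕ} (h : ∀ x ∈ s, x < b) :
    Finset.sort (insert b s) (· ≤ ·) = Finset.sort s (· ≤ ·) ++ [b] := by
  have hb : b ∉ s := fun hb => lt_irrefl b (h b hb)
  have hperm : (Finset.sort (insert b s) (· ≤ ·)).Perm (Finset.sort s (· ≤ ·) ++ [b]) := by
    refine List.Perm.trans ?_ (List.perm_append_comm (l₁ := [b]))
    rw [← Multiset.coe_eq_coe]; simp only [List.singleton_append, ← Multiset.cons_coe]
    rw [Finset.sort_eq, Finset.sort_eq, Finset.insert_val, Multiset.ndinsert_of_notMem hb]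
  refine List.Perm.eq_of_pairwise' (r := (· ≤ ·)) (Finset.pairwise_sort _ _) ?_ hperm
  rw [List.pairwise_append]
  exact ⟨Finset.pairwise_sort _ _, List.pairwise_singleton _ b, fun a ha c hc => by
    simp at hc; subst hc; exact (h a ((Finset.mem_sort _).1 ha)).le⟩

noncomputable def myG (f : ℕ × ℕ → ℝ) (s : Finset ℕ) : ℝ :=
  (((Finset.sort s (· ≤ ·)).zip (Finset.sort s (· ≤ ·)).tail).map f).prod

lemma myChainProdAppend (f : ℕ × ℕ → ℝ) : ∀ (l : List ℕ) (a b : ℕ),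
    (((l ++ [a, b]).zip (l ++ [a, b]).tail).map f).prod
      = (((l ++ [a]).zip (l ++ [a]).tail).map f).prod * f (a, b) := by
  intro l
  induction l with
  | nil => intro a b; simp
  | cons x l ih =>
    intro a b
    cases hl : l ++ [a] with
    | nil => simp at hl
    | cons y t =>
      have hl2 : l ++ [a, b] = y :: (t ++ [b]) := by
        have h1 : l ++ [a, b] = (l ++ [a]) ++ [b] := by simp
        rw [h1, hl]; simp
      have ihab := ih a b
      rw [hl, hl2] at ihab
      simp only [List.cons_append, hl, hl2]
      simp only [List.tail_cons, List.zip_cons_cons, List.map_cons, List.prod_cons]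
      simp only [List.tail_cons] at ihab
      rw [ihab]; ring

lemma myGstep (f : ℕ × ℕ → ℝ) {j n : ℕ} (T : Finset ℕ) (hj : 0 < j) (hjn : j < n)
    (hT : T ⊆ Finset.Ioo 0 j) :
    myG f (insert 0 (insert n (insert j T)))
      = myG f (insert 0 (insert j T)) * f (j, n) := by
  have h1 : insert 0 (insert n (insert j T)) = insert n (insert 0 (insert j T)) :=
    Finset.insert_comm 0 n _
  have h2 : insert 0 (insert j T) = insert j (insert 0 T) := Finset.insert_comm 0 j T
  have hlt1 : ∀ x ∈ insert 0 (insert j T), x < n := by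
    intro x hx
    rcases Finset.mem_insert.1 hx with rfl | hx
    · exact lt_of_lt_of_le hj hjn.le
    · rcases Finset.mem_insert.1 hx with rfl | hx
      · exact hjn
      · exact lt_trans (Finset.mem_Ioo.1 (hT hx)).2 hjn
  have hlt2 : ∀ x ∈ insert 0 T, x < j := by
    intro x hx
    rcases Finset.mem_insert.1 hx with rfl | hx
    · exact hj
    · exact (Finset.mem_Ioo.1 (hT hx)).2
  have hs1 : Finset.sort (insert 0 (insert n (insert j T))) (· ≤ ·)
      = Finset.sort (insert 0 T) (· ≤ ·) ++ [j, n] := by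
    rw [h1, mySortInsertMax hlt1, h2, mySortInsertMax hlt2]
    simp
  have hs2 : Finset.sort (insert 0 (insert j T)) (· ≤ ·)
      = Finset.sort (insert 0 T) (· ≤ ·) ++ [j] := by
    rw [h2, mySortInsertMax hlt2]
  rw [myG, myG, hs1, hs2, myChainProdAppend]

lemma myGzero (f : ℕ × ℕ → ℝ) {n : ℕ} (hn : 0 < n) :
    myG f (insert 0 (insert n (∅ : Finset ℕ))) = f (0, n) := by
  have h1 : insert 0 (insert n (∅ : Finset ℕ)) = insert n {0} := by
    rw [Finset.insert_comm]; rfl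
  have : Finset.sort (insert n ({0} : Finset ℕ)) (· ≤ ·) = [0, n] := by
    rw [mySortInsertMax (by simpa using hn)]; simp
  rw [myG, h1, this]
  simp

/-- Positive moments of the stationary solution of `X∞ = A(1+X∞)`: the recursion
`E[X∞^k] = (E[A^k]/(1-E[A^k])) ∑_{j<k} C(k,j) E[X∞^j]` and its closed-form solution
as a sum over chains `0 = i₀ < i₁ < ⋯ < i_m = k` (encoded by the subsets
`S ⊆ {1,…,k-1}` of intermediate indices) of `∏_j C(i_j, i_{j-1}) E[A^{i_j}]/(1-E[A^{i_j}])`. -/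
theorem stmt16 {Ω : Type*} [MeasureSpace Ω] [IsProbabilityMeasure (ℙ : Measure Ω)]
    (A X : Ω → ℝ) (k : ℕ) (hk : 1 ≤ k)
    (hApos : ∀ ω, 0 < A ω) (hXpos : ∀ ω, 0 ≤ X ω)
    (hAmeas : Measurable A) (hXmeas : Measurable X)
    (hindep : IndepFun A X ℙ)
    (hfix : Measure.map X ℙ = Measure.map (fun ω => A ω * (1 + X ω)) ℙ)
    (hAint : ∀ i ≤ k, Integrable (fun ω => A ω ^ i) ℙ)
    (hXint : ∀ j ≤ k, Integrable (fun ω => X ω ^ j) ℙ)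
    (hAlt : ∀ i, 1 ≤ i → i ≤ k → 𝔼[fun ω => A ω ^ i] < 1) :
    𝔼[fun ω => X ω ^ k]
      = 𝔼[fun ω => A ω ^ k] / (1 - 𝔼[fun ω => A ω ^ k])
        * ∑ j ∈ Finset.range k, (k.choose j : ℝ) * 𝔼[fun ω => X ω ^ j] ∧
    𝔼[fun ω => X ω ^ k]
      = ∑ S ∈ (Finset.Ioo 0 k).powerset,
          (let l := Finset.sort (insert 0 (insert k S)) (· ≤ ·)
           ((l.zip l.tail).map (fun q : ℕ × ℕ =>
             (q.2.choose q.1 : ℝ)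
               * (𝔼[fun ω => A ω ^ q.2] / (1 - 𝔼[fun ω => A ω ^ q.2])))).prod) := by
  classical
  have hrec : ∀ i, 1 ≤ i → i ≤ k →
      𝔼[fun ω => X ω ^ i] = 𝔼[fun ω => A ω ^ i] / (1 - 𝔼[fun ω => A ω ^ i])
        * ∑ j ∈ Finset.range i, (i.choose j : ℝ) * 𝔼[fun ω => X ω ^ j] := by
    intro i hi1 hik
    have hmeas1X : Measurable fun ω => (1 + X ω) ^ i := by fun_prop
    have hstep : 𝔼[fun ω => X ω ^ i]
        = 𝔼[fun ω => A ω ^ i] * 𝔼[fun ω => (1 + X ω) ^ i] := by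
      have h1 : 𝔼[fun ω => X ω ^ i] = ∫ x, x ^ i ∂(Measure.map X ℙ) := by
        rw [integral_map hXmeas.aemeasurable (by fun_prop)]
      rw [h1, hfix, integral_map (by fun_prop) (by fun_prop)]
      simp only [mul_pow]
      have hind2 : IndepFun (fun ω => A ω ^ i) (fun ω => (1 + X ω) ^ i) ℙ :=
        hindep.comp (measurable_id.pow_const i)
          ((measurable_const.add measurable_id).pow_const i)
      exact hind2.integral_mul_eq_mul_integral ((hAmeas.pow_const i).aestronglyMeasurable)
        (hmeas1X.aestronglyMeasurable)
    have hbin : 𝔼[fun ω => (1 + X ω) ^ i]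
        = ∑ j ∈ Finset.range (i+1), (i.choose j : ℝ) * 𝔼[fun ω => X ω ^ j] := by
      have h2 : (fun ω => (1 + X ω) ^ i)
          = fun ω => ∑ j ∈ Finset.range (i+1), (i.choose j : ℝ) * X ω ^ j := by
        funext ω
        rw [add_comm, add_pow]
        exact Finset.sum_congr rfl fun j hj => by ring
      rw [show 𝔼[fun ω => (1 + X ω) ^ i] = 𝔼[fun ω => ∑ j ∈ Finset.range (i+1),
        (i.choose j : ℝ) * X ω ^ j] from by rw [← h2]]
      rw [integral_finset_sum _ fun j hj =>
        ((hXint j (le_trans (Nat.lt_succ_iff.1 (Finset.mem_range.1 hj)) hik)).const_mul _)]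
      exact Finset.sum_congr rfl fun j hj => integral_const_mul _ _
    have ha1 : 𝔼[fun ω => A ω ^ i] < 1 := hAlt i hi1 hik
    have key : 𝔼[fun ω => X ω ^ i] = 𝔼[fun ω => A ω ^ i]
        * ((∑ j ∈ Finset.range i, (i.choose j : ℝ) * 𝔼[fun ω => X ω ^ j])
            + 𝔼[fun ω => X ω ^ i]) := by
      conv_lhs => rw [hstep]
      rw [hbin, Finset.sum_range_succ, Nat.choose_self]
      push_cast
      ring
    have h1a : (1:ℝ) - 𝔼[fun ω => A ω ^ i] ≠ 0 := by linarith
    rw [div_mul_eq_mul_div, eq_div_iff h1a]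
    linear_combination key
  refine ⟨hrec k hk le_rfl, ?_⟩
  set f : ℕ × ℕ → ℝ := fun q => (q.2.choose q.1 : ℝ)
    * (𝔼[fun ω => A ω ^ q.2] / (1 - 𝔼[fun ω => A ω ^ q.2])) with hf
  have hclosed : ∀ n, n ≤ k →
      𝔼[fun ω => X ω ^ n]
        = ∑ S ∈ (Finset.Ioo 0 n).powerset, myG f (insert 0 (insert n S)) := by
    intro n
    induction n using Nat.strong_induction_on with
    | _ n IH =>
    intro hnk
    rcases Nat.eq_zero_or_pos n with hn0 | hn
    · subst hn0
      simp [myG]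
    · -- rewrite the RHS via the bijection
      have hbij : ∑ S ∈ (Finset.Ioo 0 n).powerset, myG f (insert 0 (insert n S))
          = ∑ p ∈ ((Finset.range n).sigma fun j => (Finset.Ioo 0 j).powerset),
              f (p.1, n) * myG f (insert 0 (insert p.1 p.2)) := by
        refine (Finset.sum_bij'
          (fun p _ => if p.1 = 0 then (∅ : Finset ℕ) else insert p.1 p.2)
          (fun S _ => if hS : S.Nonempty then ⟨S.max' hS, S.erase (S.max' hS)⟩ else ⟨0, ∅⟩)
          ?_ ?_ ?_ ?_ ?_).symm
        · rintro ⟨j, T⟩ hp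
          simp only [Finset.mem_sigma, Finset.mem_range, Finset.mem_powerset] at hp
          obtain ⟨hjn, hT⟩ := hp
          dsimp only
          by_cases hj0 : j = 0
          · simp [hj0]
          · rw [Finset.mem_powerset, if_neg hj0]
            refine Finset.insert_subset (Finset.mem_Ioo.2 ⟨Nat.pos_of_ne_zero hj0, hjn⟩) ?_
            exact hT.trans (Finset.Ioo_subset_Ioo le_rfl hjn.le)
        · intro S hS
          simp only [Finset.mem_powerset] at hS
          by_cases hSne : S.Nonempty
          · simp only [dif_pos hSne, Finset.mem_sigma, Finset.mem_range, Finset.mem_powerset]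
            have hmax := S.max'_mem hSne
            constructor
            · exact (Finset.mem_Ioo.1 (hS hmax)).2
            · intro x hx
              have hxS := Finset.mem_of_mem_erase hx
              have hxne := Finset.ne_of_mem_erase hx
              exact Finset.mem_Ioo.2 ⟨(Finset.mem_Ioo.1 (hS hxS)).1,
                lt_of_le_of_ne (S.le_max' x hxS) hxne⟩
          · simp only [dif_neg hSne, Finset.mem_sigma, Finset.mem_range, Finset.mem_powerset]
            exact ⟨hn, Finset.empty_subset _⟩
        · rintro ⟨j, T⟩ hp
          simp only [Finset.mem_sigma, Finset.mem_range, Finset.mem_powerset] at hp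
          obtain ⟨hjn, hT⟩ := hp
          by_cases hj0 : j = 0
          · subst hj0
            have hT0 : T = ∅ := by
              have := hT; simpa [Finset.subset_empty] using this
            simp [hT0]
          · have hjpos : 0 < j := Nat.pos_of_ne_zero hj0
            have hjT : j ∉ T := fun h => lt_irrefl j (Finset.mem_Ioo.1 (hT h)).2
            have hne : (insert j T).Nonempty := ⟨j, Finset.mem_insert_self _ _⟩
            have hmax : (insert j T).max' hne = j := by
              apply le_antisymm
              · apply Finset.max'_le
                intro y hy
                rcases Finset.mem_insert.1 hy with rfl | hy
                · exact le_rfl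
                · exact (Finset.mem_Ioo.1 (hT hy)).2.le
              · exact Finset.le_max' _ j (Finset.mem_insert_self _ _)
            simp only [if_neg hj0, dif_pos hne]
            refine Sigma.ext ?_ ?_ <;> simp [hmax, Finset.erase_insert hjT]
        · intro S hS
          simp only [Finset.mem_powerset] at hS
          by_cases hSne : S.Nonempty
          · have hmax := S.max'_mem hSne
            have hmaxpos : S.max' hSne ≠ 0 :=
              (Finset.mem_Ioo.1 (hS hmax)).1.ne'
            simp only [dif_pos hSne, if_neg hmaxpos]
            exact Finset.insert_erase hmax
          · rw [Finset.not_nonempty_iff_eq_empty] at hSne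
            subst hSne
            simp
        · rintro ⟨j, T⟩ hp
          simp only [Finset.mem_sigma, Finset.mem_range, Finset.mem_powerset] at hp
          obtain ⟨hjn, hT⟩ := hp
          dsimp only
          by_cases hj0 : j = 0
          · subst hj0
            have hT0 : T = ∅ := by
              have := hT; simpa [Finset.subset_empty] using this
            subst hT0
            rw [if_pos rfl, myGzero f hn]
            have h1 : myG f (insert 0 (insert 0 (∅ : Finset ℕ))) = 1 := by simp [myG]
            rw [h1, mul_one]
          · have hjpos : 0 < j := Nat.pos_of_ne_zero hj0
            rw [if_neg hj0, myGstep f T hjpos hjn hT]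
            ring
      rw [hbij, Finset.sum_sigma]
      have hIH : ∀ j ∈ Finset.range n,
          ∑ T ∈ (Finset.Ioo 0 j).powerset, f (j, n) * myG f (insert 0 (insert j T))
            = (n.choose j : ℝ) * (𝔼[fun ω => A ω ^ n] / (1 - 𝔼[fun ω => A ω ^ n]))
              * 𝔼[fun ω => X ω ^ j] := by
        intro j hj
        have hjn := Finset.mem_range.1 hj
        rw [← Finset.mul_sum, ← IH j hjn (le_trans hjn.le hnk)]
      rw [Finset.sum_congr rfl hIH, hrec n hn hnk, Finset.mul_sum]
      exact Finset.sum_congr rfl fun j hj => by ring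
  have := hclosed k le_rfl
  rw [this]
  rfl
end

section
/- Let A be positive with E[A^k] < ∞ and (1−p)E[A^k] < 1, Q Bernoulli(p), and X ≥ 0 satisfy X = AQ + A(1−Q)(1+X) in distribution with X, A, Q independent. Then E[X^k] = (E[A^k]/(1 − (1−p)E[A^k])) · [ (1−p) Σ_{j=0}^{k-1} C(k,j) E[X^j] + p ]. -/
open MeasureTheory ProbabilityTheory Real ENNReal

private lemma pair_restrict_eq {Ω : Type*} [MeasureSpace Ω] [IsProbabilityMeasure (ℙ : Measure Ω)]
    {A₀ X₀ : Ω → ℝ} (hA₀ : Measurable A₀) (hX₀ : Measurable X₀)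
    (s : Set Ω) (r : ℝ≥0∞)
    (hmul : ∀ B C : Set ℝ, MeasurableSet B → MeasurableSet C →
      ℙ (A₀ ⁻¹' B ∩ X₀ ⁻¹' C ∩ s) = ℙ (A₀ ⁻¹' B) * r * ℙ (X₀ ⁻¹' C))
    (hAX : ∀ B C : Set ℝ, MeasurableSet B → MeasurableSet C →
      ℙ (A₀ ⁻¹' B ∩ X₀ ⁻¹' C) = ℙ (A₀ ⁻¹' B) * ℙ (X₀ ⁻¹' C)) :
    ∀ D : Set (ℝ × ℝ), MeasurableSet D →
      ℙ ((fun ω => (A₀ ω, X₀ ω)) ⁻¹' D ∩ s) = r * ℙ ((fun ω => (A₀ ω, X₀ ω)) ⁻¹' D) := by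
  have hpair : Measurable fun ω => (A₀ ω, X₀ ω) := hA₀.prodMk hX₀
  have hr : r ≠ ⊤ := by
    intro h
    have h2 := hmul Set.univ Set.univ MeasurableSet.univ MeasurableSet.univ
    simp only [Set.preimage_univ, Set.univ_inter, measure_univ, one_mul, mul_one, h] at h2
    exact measure_ne_top ℙ s h2
  have key : ((ℙ : Measure Ω).restrict s).map (fun ω => (A₀ ω, X₀ ω))
      = r • (ℙ : Measure Ω).map (fun ω => (A₀ ω, X₀ ω)) := by
    haveI : IsFiniteMeasure (((ℙ : Measure Ω).restrict s).map (fun ω => (A₀ ω, X₀ ω))) := by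
      constructor
      rw [Measure.map_apply hpair MeasurableSet.univ]
      exact measure_lt_top _ _
    refine ext_of_generate_finite _ generateFrom_prod.symm isPiSystem_prod ?_ ?_
    · rintro _ ⟨B, hB, C, hC, rfl⟩
      replace hB : MeasurableSet B := hB
      replace hC : MeasurableSet C := hC
      have hBC : (fun ω => (A₀ ω, X₀ ω)) ⁻¹' (B ×ˢ C) = A₀ ⁻¹' B ∩ X₀ ⁻¹' C := by
        ext ω; simp [Set.mem_prod]
      rw [Measure.map_apply hpair (hB.prod hC), Measure.smul_apply,
        Measure.map_apply hpair (hB.prod hC),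
        Measure.restrict_apply (hpair (hB.prod hC)), hBC, hmul B C hB hC, hAX B C hB hC,
        smul_eq_mul]
      ring
    · have h2 := hmul Set.univ Set.univ MeasurableSet.univ MeasurableSet.univ
      simp only [Set.preimage_univ, Set.univ_inter, measure_univ, one_mul, mul_one] at h2
      rw [Measure.map_apply hpair MeasurableSet.univ, Measure.smul_apply,
        Measure.map_apply hpair MeasurableSet.univ]
      simp [Measure.restrict_apply_univ, h2, smul_eq_mul]
  intro D hD
  have h1 : ℙ ((fun ω => (A₀ ω, X₀ ω)) ⁻¹' D ∩ s)
      = (((ℙ : Measure Ω).restrict s).map (fun ω => (A₀ ω, X₀ ω))) D := by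
    rw [Measure.map_apply hpair hD, Measure.restrict_apply (hpair hD)]
  rw [h1, key, Measure.smul_apply, Measure.map_apply hpair hD, smul_eq_mul]

/-- Positive moments of the solution of `X = AQ + A(1-Q)(1+X)` in distribution, with
`Q` Bernoulli(p) and `X, A, Q` mutually independent:
`E[X^k] = (E[A^k]/(1-(1-p)E[A^k])) ((1-p) ∑_{j<k} C(k,j) E[X^j] + p)`. -/
theorem stmt17 {Ω : Type*} [MeasureSpace Ω] [IsProbabilityMeasure (ℙ : Measure Ω)]
    (A Q X : Ω → ℝ) (p : ℝ) (hp : p ∈ Set.Ioo (0 : ℝ) 1) (k : ℕ) (hk : 1 ≤ k)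
    (hApos : ∀ ω, 0 < A ω) (hXpos : ∀ ω, 0 ≤ X ω)
    (hQ1 : ℙ {ω | Q ω = 1} = ENNReal.ofReal p)
    (hQ0 : ℙ {ω | Q ω = 0} = ENNReal.ofReal (1 - p))
    (hindep : iIndepFun (m := fun _ => (inferInstance : MeasurableSpace ℝ)) ![A, Q, X] ℙ)
    (hfix : Measure.map X ℙ
      = Measure.map (fun ω => A ω * Q ω + A ω * (1 - Q ω) * (1 + X ω)) ℙ)
    (hAint : ∀ i ≤ k, Integrable (fun ω => A ω ^ i) ℙ)
    (hXint : ∀ j ≤ k, Integrable (fun ω => X ω ^ j) ℙ)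
    (hAlt : ∀ i, 1 ≤ i → i ≤ k → (1 - p) * 𝔼[fun ω => A ω ^ i] < 1) :
    𝔼[fun ω => X ω ^ k]
      = 𝔼[fun ω => A ω ^ k] / (1 - (1 - p) * 𝔼[fun ω => A ω ^ k])
        * ((1 - p) * ∑ j ∈ Finset.range k, (k.choose j : ℝ) * 𝔼[fun ω => X ω ^ j]
            + p) := by
  obtain ⟨hp0, hp1⟩ := hp
  set RHS := fun ω => A ω * Q ω + A ω * (1 - Q ω) * (1 + X ω) with hRHSdef
  -- basic measurability
  have mX : AEMeasurable X ℙ := by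
    have := (hXint 1 hk).aemeasurable; simpa using this
  have mA : AEMeasurable A ℙ := by
    have := (hAint 1 hk).aemeasurable; simpa using this
  have mRHS : AEMeasurable RHS ℙ := by
    by_contra hcon
    rw [Measure.map_of_not_aemeasurable hcon] at hfix
    haveI := Measure.isProbabilityMeasure_map mX
    have h1 : (Measure.map X ℙ) Set.univ = 1 := measure_univ
    rw [hfix] at h1
    simp at h1
  have mh : AEMeasurable (fun ω => Q ω * X ω) ℙ := by
    have heq : (fun ω => Q ω * X ω)
        = fun ω => (A ω + A ω * X ω - RHS ω) / A ω := by
      funext ω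
      have hA := (hApos ω).ne'
      rw [hRHSdef]
      field_simp
      ring
    rw [heq]
    exact ((mA.add (mA.mul mX)).sub mRHS).div mA
  obtain ⟨X₀, hX₀m, hX0⟩ : ∃ X₀, Measurable X₀ ∧ X =ᵐ[ℙ] X₀ :=
    ⟨mX.mk X, mX.measurable_mk, mX.ae_eq_mk⟩
  obtain ⟨A₀, hA₀m, hA0⟩ : ∃ A₀, Measurable A₀ ∧ A =ᵐ[ℙ] A₀ :=
    ⟨mA.mk A, mA.measurable_mk, mA.ae_eq_mk⟩
  obtain ⟨h₀, hh₀m, hh0⟩ : ∃ h₀, Measurable h₀ ∧ (fun ω => Q ω * X ω) =ᵐ[ℙ] h₀ :=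
    ⟨mh.mk _, mh.measurable_mk, mh.ae_eq_mk⟩
  -- independence facts
  have h02 : IndepFun A X ℙ := hindep.indepFun (show (0:Fin 3) ≠ 2 by decide)
  have htriple : ∀ (e : ℝ) (B C : Set ℝ), MeasurableSet B → MeasurableSet C →
      ℙ (A ⁻¹' B ∩ X ⁻¹' C ∩ Q ⁻¹' {e})
        = ℙ (A ⁻¹' B) * ℙ (Q ⁻¹' {e}) * ℙ (X ⁻¹' C) := by
    intro e B C hB hC
    have H := hindep.measure_inter_preimage_eq_mul (S := Finset.univ)
      (sets := ![B, {e}, C]) (fun i _ => by fin_cases i <;> simp [hB, hC])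
    have hset : (⋂ i ∈ Finset.univ, (![A, Q, X] i) ⁻¹' (![B, ({e} : Set ℝ), C] i))
        = A ⁻¹' B ∩ X ⁻¹' C ∩ Q ⁻¹' {e} := by
      ext ω
      simp only [Set.mem_iInter, Finset.mem_univ, forall_true_left, Set.mem_inter_iff]
      constructor
      · intro h; exact ⟨⟨h 0, h 2⟩, h 1⟩
      · rintro ⟨⟨h1, h3⟩, h2⟩ i; fin_cases i <;> assumption
    rw [hset, Fin.prod_univ_three] at H
    exact H
  -- congruence helpers
  have hACongr : ∀ B : Set ℝ, ℙ (A ⁻¹' B) = ℙ (A₀ ⁻¹' B) := fun B =>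
    measure_congr (Filter.eventuallyEq_set.2 (hA0.mono fun ω h => by
      simp only [Set.mem_preimage, h]))
  have hXCongr : ∀ C : Set ℝ, ℙ (X ⁻¹' C) = ℙ (X₀ ⁻¹' C) := fun C =>
    measure_congr (Filter.eventuallyEq_set.2 (hX0.mono fun ω h => by
      simp only [Set.mem_preimage, h]))
  have hpairCongr : ∀ (B C : Set ℝ) (s : Set Ω),
      ℙ (A ⁻¹' B ∩ X ⁻¹' C ∩ s) = ℙ (A₀ ⁻¹' B ∩ X₀ ⁻¹' C ∩ s) := fun B C s =>
    measure_congr (Filter.eventuallyEq_set.2 (by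
      filter_upwards [hA0, hX0] with ω h1 h2
      simp only [Set.mem_inter_iff, Set.mem_preimage, h1, h2]))
  have hpairCongr2 : ∀ (B C : Set ℝ),
      ℙ (A ⁻¹' B ∩ X ⁻¹' C) = ℙ (A₀ ⁻¹' B ∩ X₀ ⁻¹' C) := fun B C =>
    measure_congr (Filter.eventuallyEq_set.2 (by
      filter_upwards [hA0, hX0] with ω h1 h2
      simp only [Set.mem_inter_iff, Set.mem_preimage, h1, h2]))
  have hQpre1 : ℙ (Q ⁻¹' {(1:ℝ)}) = ENNReal.ofReal p := by
    have he : Q ⁻¹' {(1:ℝ)} = {ω | Q ω = 1} := by ext ω; simp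
    rw [he, hQ1]
  have hQpre0 : ℙ (Q ⁻¹' {(0:ℝ)}) = ENNReal.ofReal (1 - p) := by
    have he : Q ⁻¹' {(0:ℝ)} = {ω | Q ω = 0} := by ext ω; simp
    rw [he, hQ0]
  have hAX₀ : ∀ B C : Set ℝ, MeasurableSet B → MeasurableSet C →
      ℙ (A₀ ⁻¹' B ∩ X₀ ⁻¹' C) = ℙ (A₀ ⁻¹' B) * ℙ (X₀ ⁻¹' C) := fun B C hB hC => by
    rw [← hpairCongr2 B C, h02.measure_inter_preimage_eq_mul B C hB hC, hACongr, hXCongr]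
  have hs1 := pair_restrict_eq hA₀m hX₀m (Q ⁻¹' {(1:ℝ)}) (ENNReal.ofReal p)
    (fun B C hB hC => by
      rw [← hpairCongr B C, htriple 1 B C hB hC, hQpre1, hACongr, hXCongr]) hAX₀
  have hs0 := pair_restrict_eq hA₀m hX₀m (Q ⁻¹' {(0:ℝ)}) (ENNReal.ofReal (1 - p))
    (fun B C hB hC => by
      rw [← hpairCongr B C, htriple 0 B C hB hC, hQpre0, hACongr, hXCongr]) hAX₀
  -- the exceptional set
  set F₁ : Set Ω := {ω | h₀ ω / X₀ ω = 1} ∩ {ω | 0 < X₀ ω} with hF₁def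
  set F₀ : Set Ω := {ω | h₀ ω / X₀ ω = 0} ∩ {ω | 0 < X₀ ω} with hF₀def
  set E : Set Ω := {ω | ¬(h₀ ω / X₀ ω = 0 ∨ h₀ ω / X₀ ω = 1)} ∩ {ω | 0 < X₀ ω}
    with hEdef
  have hQ₀m : Measurable fun ω => h₀ ω / X₀ ω := hh₀m.div hX₀m
  have hXposmeas : MeasurableSet {ω | 0 < X₀ ω} := measurableSet_lt measurable_const hX₀m
  have hF₁meas : MeasurableSet F₁ :=
    (hQ₀m (measurableSet_singleton 1)).inter hXposmeas
  have hF₀meas : MeasurableSet F₀ :=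
    (hQ₀m (measurableSet_singleton 0)).inter hXposmeas
  have hEmeas : MeasurableSet E := by
    refine MeasurableSet.inter ?_ hXposmeas
    have : {ω | ¬(h₀ ω / X₀ ω = 0 ∨ h₀ ω / X₀ ω = 1)}
        = ((fun ω => h₀ ω / X₀ ω) ⁻¹' {0} ∪ (fun ω => h₀ ω / X₀ ω) ⁻¹' {1})ᶜ := by
      ext ω; simp [not_or]
    rw [this]
    exact ((hQ₀m (measurableSet_singleton 0)).union (hQ₀m (measurableSet_singleton 1))).compl
  have hkey_ae : ∀ᵐ ω ∂ℙ, (0 < X₀ ω ↔ 0 < X ω)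
      ∧ (0 < X₀ ω → ∀ e : ℝ, (h₀ ω / X₀ ω = e ↔ Q ω = e)) := by
    filter_upwards [hX0, hh0] with ω h1 h3
    refine ⟨by rw [h1], fun hx e => ?_⟩
    have hxne : X ω ≠ 0 := by rw [h1]; exact ne_of_gt hx
    rw [← h3, ← h1, mul_div_assoc, div_self hxne, mul_one]
  have hprojset : ∀ D : Set (ℝ × ℝ),
      (fun ω => (A₀ ω, X₀ ω)) ⁻¹' (D ∩ Set.univ ×ˢ Set.Ioi 0)
        = (fun ω => (A₀ ω, X₀ ω)) ⁻¹' D ∩ {ω | 0 < X₀ ω} := by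
    intro D; ext ω
    simp [Set.mem_preimage, Set.mem_prod]
  have hF₁p : ℙ F₁ = ENNReal.ofReal p * ℙ {ω | 0 < X₀ ω} := by
    have h1 : ℙ F₁
        = ℙ ((fun ω => (A₀ ω, X₀ ω)) ⁻¹' (Set.univ ×ˢ Set.Ioi 0) ∩ Q ⁻¹' {1}) := by
      refine measure_congr (Filter.eventuallyEq_set.2 ?_)
      filter_upwards [hkey_ae] with ω ⟨hiff, himp⟩
      simp only [hF₁def, Set.mem_inter_iff, Set.mem_preimage, Set.mem_prod, Set.mem_univ,
        true_and, Set.mem_Ioi, Set.mem_singleton_iff, Set.mem_setOf_eq]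
      constructor
      · rintro ⟨hq, hx⟩; exact ⟨hx, (himp hx 1).1 hq⟩
      · rintro ⟨hx, hq⟩; exact ⟨(himp hx 1).2 hq, hx⟩
    rw [h1, hs1 _ (MeasurableSet.univ.prod measurableSet_Ioi)]
    congr 1
    have he : (fun ω => (A₀ ω, X₀ ω)) ⁻¹' (Set.univ ×ˢ Set.Ioi 0) = {ω | 0 < X₀ ω} := by
      ext ω; simp
    rw [he]
  have hF₀p : ℙ F₀ = ENNReal.ofReal (1 - p) * ℙ {ω | 0 < X₀ ω} := by
    have h1 : ℙ F₀
        = ℙ ((fun ω => (A₀ ω, X₀ ω)) ⁻¹' (Set.univ ×ˢ Set.Ioi 0) ∩ Q ⁻¹' {0}) := by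
      refine measure_congr (Filter.eventuallyEq_set.2 ?_)
      filter_upwards [hkey_ae] with ω ⟨hiff, himp⟩
      simp only [hF₀def, Set.mem_inter_iff, Set.mem_preimage, Set.mem_prod, Set.mem_univ,
        true_and, Set.mem_Ioi, Set.mem_singleton_iff, Set.mem_setOf_eq]
      constructor
      · rintro ⟨hq, hx⟩; exact ⟨hx, (himp hx 0).1 hq⟩
      · rintro ⟨hx, hq⟩; exact ⟨(himp hx 0).2 hq, hx⟩
    rw [h1, hs0 _ (MeasurableSet.univ.prod measurableSet_Ioi)]
    congr 1
    have he : (fun ω => (A₀ ω, X₀ ω)) ⁻¹' (Set.univ ×ˢ Set.Ioi 0) = {ω | 0 < X₀ ω} := by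
      ext ω; simp
    rw [he]
  have hEzero : ℙ E = 0 := by
    have hsplit : {ω | 0 < X₀ ω} = (F₁ ∪ F₀) ∪ E := by
      ext ω
      by_cases h : h₀ ω / X₀ ω = 0 <;> by_cases h' : h₀ ω / X₀ ω = 1 <;>
        simp [hF₁def, hF₀def, hEdef, h, h'] <;> tauto
    have hd1 : Disjoint F₁ F₀ := by
      rw [Set.disjoint_left]
      rintro ω ⟨h1, _⟩ ⟨h2, _⟩
      rw [Set.mem_setOf_eq] at h1 h2
      rw [h1] at h2; norm_num at h2
    have hd2 : Disjoint (F₁ ∪ F₀) E := by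
      rw [Set.disjoint_left]
      rintro ω (⟨h1, _⟩ | ⟨h1, _⟩) ⟨h2, _⟩ <;> rw [Set.mem_setOf_eq] at h1 h2 <;>
        exact h2 (by tauto)
    have heq : ℙ {ω | 0 < X₀ ω} = ℙ {ω | 0 < X₀ ω} + ℙ E := by
      nth_rewrite 1 [hsplit]
      rw [measure_union hd2 hEmeas, measure_union hd1 hF₀meas, hF₁p, hF₀p,
        ← add_mul, ← ENNReal.ofReal_add hp0.le (by linarith)]
      norm_num
    have := (ENNReal.add_right_inj (measure_ne_top ℙ _)).1
      (by rw [← heq, add_zero] : ℙ {ω | 0 < X₀ ω} + (0:ℝ≥0∞) = ℙ {ω | 0 < X₀ ω} + ℙ E)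
    exact this.symm
  -- key pushforward identity
  have hpair₀ : Measurable fun ω => (A₀ ω, X₀ ω) := hA₀m.prodMk hX₀m
  have hmapkey : Measure.map (fun ω => (A₀ ω, X₀ ω)) ((ℙ : Measure Ω).restrict F₁)
      = ENNReal.ofReal p
        • Measure.map (fun ω => (A₀ ω, X₀ ω)) ((ℙ : Measure Ω).restrict {ω | 0 < X₀ ω}) := by
    ext D hD
    rw [Measure.map_apply hpair₀ hD, Measure.smul_apply, Measure.map_apply hpair₀ hD,
      Measure.restrict_apply (hpair₀ hD), Measure.restrict_apply (hpair₀ hD), smul_eq_mul]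
    have h1 : ℙ ((fun ω => (A₀ ω, X₀ ω)) ⁻¹' D ∩ F₁)
        = ℙ ((fun ω => (A₀ ω, X₀ ω)) ⁻¹' (D ∩ Set.univ ×ˢ Set.Ioi 0) ∩ Q ⁻¹' {1}) := by
      refine measure_congr (Filter.eventuallyEq_set.2 ?_)
      filter_upwards [hkey_ae] with ω ⟨hiff, himp⟩
      rw [hprojset D]
      simp only [hF₁def, Set.mem_inter_iff, Set.mem_preimage, Set.mem_singleton_iff,
        Set.mem_setOf_eq]
      constructor
      · rintro ⟨hD', hq, hx⟩; exact ⟨⟨hD', hx⟩, (himp hx 1).1 hq⟩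
      · rintro ⟨⟨hD', hx⟩, hq⟩; exact ⟨hD', (himp hx 1).2 hq, hx⟩
    rw [h1, hs1 _ (hD.inter (MeasurableSet.univ.prod measurableSet_Ioi)), hprojset D]
  -- integrability
  have iAk : Integrable (fun ω => A ω ^ k) ℙ := hAint k le_rfl
  have i1Xk : Integrable (fun ω => (1 + X ω) ^ k) ℙ := by
    have heq : (fun ω => (1 + X ω) ^ k)
        = fun ω => ∑ j ∈ Finset.range (k+1), X ω ^ j * 1 ^ (k - j) * (k.choose j : ℝ) := by
      funext ω; rw [add_comm, add_pow]
    rw [heq]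
    refine integrable_finset_sum _ fun j hj => ?_
    simpa using (hXint j (Finset.mem_range_succ_iff.1 hj)).mul_const ((k.choose j : ℝ))
  have hindAk1Xk : IndepFun (fun ω => A ω ^ k) (fun ω => (1 + X ω) ^ k) ℙ :=
    h02.comp (measurable_id.pow_const k) ((measurable_const.add measurable_id).pow_const k)
  have ig₁ : Integrable (fun ω => A ω ^ k * (1 + X ω) ^ k) ℙ :=
    hindAk1Xk.integrable_mul iAk i1Xk
  have hEg₁ : 𝔼[fun ω => A ω ^ k * (1 + X ω) ^ k]
      = 𝔼[fun ω => A ω ^ k] * 𝔼[fun ω => (1 + X ω) ^ k] :=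
    hindAk1Xk.integral_fun_mul_eq_mul_integral iAk.1 i1Xk.1
  have hf₀ae : (fun ω => A ω ^ k * (1 - (1 + X ω) ^ k))
      =ᵐ[ℙ] fun ω => A₀ ω ^ k * (1 - (1 + X₀ ω) ^ k) := by
    filter_upwards [hX0, hA0] with ω h1 h2; rw [h1, h2]
  have iAψ : Integrable (fun ω => A ω ^ k * (1 - (1 + X ω) ^ k)) ℙ := by
    have heq : (fun ω => A ω ^ k * (1 - (1 + X ω) ^ k))
        = fun ω => A ω ^ k - A ω ^ k * (1 + X ω) ^ k := by funext ω; ring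
    rw [heq]; exact iAk.sub ig₁
  have if₀ : Integrable (fun ω => A₀ ω ^ k * (1 - (1 + X₀ ω) ^ k)) ℙ := iAψ.congr hf₀ae
  have ig₂ : Integrable (F₁.indicator fun ω => A₀ ω ^ k * (1 - (1 + X₀ ω) ^ k)) ℙ :=
    if₀.indicator hF₁meas
  -- main pointwise a.e. identity
  have hEc : ∀ᵐ ω ∂ℙ, ω ∉ E := measure_eq_zero_iff_ae_notMem.1 hEzero
  have hmain : (fun ω => RHS ω ^ k) =ᵐ[ℙ]
      fun ω => A ω ^ k * (1 + X ω) ^ k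
        + F₁.indicator (fun ω => A₀ ω ^ k * (1 - (1 + X₀ ω) ^ k)) ω := by
    filter_upwards [hX0, hA0, hh0, hEc] with ω e1 e2 e3 e4
    by_cases hx : X ω = 0
    · have hx₀ : ¬ 0 < X₀ ω := by rw [← e1, hx]; exact lt_irrefl 0
      have hni : ω ∉ F₁ := fun hmem => hx₀ hmem.2
      rw [Set.indicator_of_notMem hni, hRHSdef]
      simp only
      rw [hx]
      have hee : A ω * Q ω + A ω * (1 - Q ω) * (1 + 0) = A ω := by ring
      rw [hee]
      norm_num
    · have hxpos : 0 < X ω := lt_of_le_of_ne (hXpos ω) (Ne.symm hx)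
      have hx₀pos : 0 < X₀ ω := by rw [← e1]; exact hxpos
      have hQval : h₀ ω / X₀ ω = Q ω := by
        rw [← e3, ← e1, mul_div_assoc, div_self hx, mul_one]
      have hQ01 : h₀ ω / X₀ ω = 0 ∨ h₀ ω / X₀ ω = 1 := by
        by_contra hcon
        exact e4 ⟨hcon, hx₀pos⟩
      rcases hQ01 with hq | hq
      · have hQ0' : Q ω = 0 := by rw [← hQval, hq]
        have hni : ω ∉ F₁ := by
          intro hmem
          have h5 := hmem.1
          rw [Set.mem_setOf_eq] at h5
          rw [h5] at hq; norm_num at hq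
        rw [Set.indicator_of_notMem hni, hRHSdef]
        simp only
        rw [hQ0']
        have hee : A ω * 0 + A ω * (1 - 0) * (1 + X ω) = A ω * (1 + X ω) := by ring
        rw [hee, mul_pow, add_zero]
      · have hQ1' : Q ω = 1 := by rw [← hQval, hq]
        have hmem : ω ∈ F₁ := ⟨hq, hx₀pos⟩
        rw [Set.indicator_of_mem hmem, hRHSdef]
        simp only
        rw [hQ1', ← e1, ← e2]
        have hee : A ω * 1 + A ω * (1 - 1) * (1 + X ω) = A ω := by ring
        rw [hee]
        ring
  -- integral computation
  have hpowmeas : AEStronglyMeasurable (fun x : ℝ => x ^ k) (Measure.map X ℙ) :=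
    (measurable_id.pow_const k).aestronglyMeasurable
  have hpowmeas' : AEStronglyMeasurable (fun x : ℝ => x ^ k) (Measure.map RHS ℙ) :=
    (measurable_id.pow_const k).aestronglyMeasurable
  have step1 : 𝔼[fun ω => X ω ^ k] = 𝔼[fun ω => RHS ω ^ k] := by
    have h1 : ∫ x, x ^ k ∂(Measure.map X ℙ) = 𝔼[fun ω => X ω ^ k] :=
      integral_map mX hpowmeas
    have h2 : ∫ x, x ^ k ∂(Measure.map RHS ℙ) = 𝔼[fun ω => RHS ω ^ k] :=
      integral_map mRHS hpowmeas'
    rw [← h1, hfix, h2]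
  have step2 : 𝔼[fun ω => RHS ω ^ k]
      = 𝔼[fun ω => A ω ^ k * (1 + X ω) ^ k]
        + ∫ ω, F₁.indicator (fun ω => A₀ ω ^ k * (1 - (1 + X₀ ω) ^ k)) ω ∂ℙ := by
    rw [integral_congr_ae hmain]
    exact integral_add ig₁ ig₂
  have hgmeas : Measurable fun y : ℝ × ℝ => y.1 ^ k * (1 - (1 + y.2) ^ k) :=
    (measurable_fst.pow_const k).mul
      (measurable_const.sub ((measurable_const.add measurable_snd).pow_const k))
  have step4 : ∫ ω, F₁.indicator (fun ω => A₀ ω ^ k * (1 - (1 + X₀ ω) ^ k)) ω ∂ℙ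
      = p * 𝔼[fun ω => A ω ^ k * (1 - (1 + X ω) ^ k)] := by
    rw [integral_indicator hF₁meas]
    have hmap1 : ∫ ω in F₁, A₀ ω ^ k * (1 - (1 + X₀ ω) ^ k) ∂ℙ
        = ∫ y : ℝ × ℝ, y.1 ^ k * (1 - (1 + y.2) ^ k)
            ∂(Measure.map (fun ω => (A₀ ω, X₀ ω)) ((ℙ : Measure Ω).restrict F₁)) :=
      (integral_map hpair₀.aemeasurable hgmeas.aestronglyMeasurable).symm
    have hmap2 : ∫ y : ℝ × ℝ, y.1 ^ k * (1 - (1 + y.2) ^ k)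
            ∂(Measure.map (fun ω => (A₀ ω, X₀ ω)) ((ℙ : Measure Ω).restrict {ω | 0 < X₀ ω}))
        = ∫ ω in {ω | 0 < X₀ ω}, A₀ ω ^ k * (1 - (1 + X₀ ω) ^ k) ∂ℙ :=
      integral_map hpair₀.aemeasurable hgmeas.aestronglyMeasurable
    rw [hmap1, hmapkey, integral_smul_measure, ENNReal.toReal_ofReal hp0.le, hmap2,
      smul_eq_mul]
    congr 1
    rw [← integral_indicator hXposmeas]
    refine integral_congr_ae ?_
    filter_upwards [hX0, hA0] with ω e1 e2
    by_cases h : ω ∈ {ω | 0 < X₀ ω}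
    · rw [Set.indicator_of_mem h, ← e1, ← e2]
    · rw [Set.indicator_of_notMem h]
      have h0 : X₀ ω = 0 :=
        le_antisymm (not_lt.1 h) (by rw [← e1]; exact hXpos ω)
      have hX0' : X ω = 0 := by rw [e1, h0]
      rw [hX0']
      norm_num
  have hEAψ : 𝔼[fun ω => A ω ^ k * (1 - (1 + X ω) ^ k)]
      = 𝔼[fun ω => A ω ^ k] - 𝔼[fun ω => A ω ^ k] * 𝔼[fun ω => (1 + X ω) ^ k] := by
    have heq : (fun ω => A ω ^ k * (1 - (1 + X ω) ^ k))
        = fun ω => A ω ^ k - A ω ^ k * (1 + X ω) ^ k := by funext ω; ring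
    rw [heq, integral_sub iAk ig₁, hEg₁]
  have hS1 : 𝔼[fun ω => (1 + X ω) ^ k]
      = 𝔼[fun ω => X ω ^ k]
        + ∑ j ∈ Finset.range k, (k.choose j : ℝ) * 𝔼[fun ω => X ω ^ j] := by
    have heq : (fun ω => (1 + X ω) ^ k)
        = fun ω => ∑ j ∈ Finset.range (k+1), X ω ^ j * 1 ^ (k - j) * (k.choose j : ℝ) := by
      funext ω; rw [add_comm, add_pow]
    rw [heq, integral_finset_sum _ (fun j hj => by
      simpa using (hXint j (Finset.mem_range_succ_iff.1 hj)).mul_const ((k.choose j : ℝ)))]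
    have hterm : ∀ j, (∫ ω, X ω ^ j * 1 ^ (k - j) * (k.choose j : ℝ) ∂ℙ)
        = (k.choose j : ℝ) * 𝔼[fun ω => X ω ^ j] := by
      intro j
      simp only [one_pow, mul_one]
      rw [integral_mul_const]
      ring
    simp only [hterm]
    rw [Finset.sum_range_succ, Nat.choose_self]
    push_cast
    ring
  have key : 𝔼[fun ω => X ω ^ k]
      = 𝔼[fun ω => A ω ^ k] * 𝔼[fun ω => (1 + X ω) ^ k]
        + p * (𝔼[fun ω => A ω ^ k]
            - 𝔼[fun ω => A ω ^ k] * 𝔼[fun ω => (1 + X ω) ^ k]) := by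
    rw [step1, step2, hEg₁, step4, hEAψ]
  have hc : (1 - p) * 𝔼[fun ω => A ω ^ k] < 1 := hAlt k hk le_rfl
  have hne : 1 - (1 - p) * 𝔼[fun ω => A ω ^ k] ≠ 0 := by
    have : 0 < 1 - (1 - p) * 𝔼[fun ω => A ω ^ k] := by linarith
    exact ne_of_gt this
  rw [hS1] at key
  rw [div_mul_eq_mul_div, eq_div_iff hne]
  linear_combination key
end

section
/- For X_n = Σ_{i=1}^{n} exp(σ W_{t_i} + (m − σ²/2) t_i) with t_i = iτ, fixed n ∈ ℕ: lim_{x→∞} log P(X_n ≥ x) / (log x)² = −1/(2σ²τn). -/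
open MeasureTheory ProbabilityTheory Real

open Set
open scoped NNReal ENNReal
set_option maxHeartbeats 1000000


lemma tail_toReal {v : ℝ≥0} (hv : v ≠ 0) (a : ℝ) :
    ((gaussianReal 0 v) (Ici a)).toReal = ∫ x in Ici a, gaussianPDFReal 0 v x := by
  rw [gaussianReal_apply_eq_integral 0 hv, ENNReal.toReal_ofReal]
  exact setIntegral_nonneg measurableSet_Ici fun x _ => gaussianPDFReal_nonneg 0 v x

lemma tail_ub {v : ℝ≥0} (hv : v ≠ 0) {a : ℝ} (ha : 1 ≤ a) :
    ((gaussianReal 0 v) (Ici a)).toReal ≤ Real.sqrt v * Real.exp (-a^2/(2*v)) := by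
  have hv0 : (0:ℝ) < v := lt_of_le_of_ne v.coe_nonneg (by exact_mod_cast hv.symm)
  have ha0 : (0:ℝ) < a := lt_of_lt_of_le one_pos ha
  have hc : (0:ℝ) < a / v := div_pos ha0 hv0
  rw [tail_toReal hv, integral_Ici_eq_integral_Ioi]
  have key : ∫ x in Ioi a, gaussianPDFReal 0 v x
      ≤ ∫ x in Ioi a, (√(2 * π * (v:ℝ)))⁻¹ * (Real.exp (a^2/(2*v)) * Real.exp (-(a/v) * x)) := by
    apply setIntegral_mono_on
    · exact (integrable_gaussianPDFReal 0 v).integrableOn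
    · exact (((exp_neg_integrableOn_Ioi a hc).const_mul _).const_mul _)
    · exact measurableSet_Ioi
    · intro x _
      rw [gaussianPDFReal, ← Real.exp_add]
      apply mul_le_mul_of_nonneg_left _ (by positivity)
      apply Real.exp_le_exp.2
      rw [sub_zero]
      rw [div_add' _ _ _ (by positivity), div_le_div_iff₀ (by positivity) (by positivity)]
      have hav : -(a / (v:ℝ)) * x * (2*(v:ℝ)) = -(2*a*x) := by field_simp
      rw [hav]
      nlinarith [mul_nonneg (sq_nonneg (x - a)) hv0.le]
  refine key.trans ?_
  have hint : ∫ x in Ioi a, Real.exp (-(a/(v:ℝ)) * x) = (a/(v:ℝ))⁻¹ * Real.exp (-(a/v) * a) := by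
    have h2 := MeasureTheory.integral_comp_mul_left_Ioi (fun y => Real.exp (-y)) a hc
    simp only [smul_eq_mul] at h2
    have h3 : (fun x => Real.exp (-(a/(v:ℝ)) * x)) = fun x => Real.exp (-(a/(v:ℝ) * x)) := by
      funext x; rw [neg_mul]
    rw [h3, h2, integral_exp_neg_Ioi, neg_mul]
  rw [integral_const_mul, integral_const_mul, hint]
  have hexp : Real.exp (a^2/(2*(v:ℝ))) * Real.exp (-(a/(v:ℝ))*a) = Real.exp (-a^2/(2*(v:ℝ))) := by
    rw [← Real.exp_add]; congr 1; field_simp; ring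
  have heq : (√(2 * π * (v:ℝ)))⁻¹ * (Real.exp (a^2/(2*(v:ℝ))) * ((a/(v:ℝ))⁻¹ * Real.exp (-(a/(v:ℝ)) * a)))
      = (√(2 * π * (v:ℝ)))⁻¹ * ((v:ℝ)/a) * (Real.exp (a^2/(2*(v:ℝ))) * Real.exp (-(a/(v:ℝ))*a)) := by
    rw [inv_div]; ring
  rw [heq, hexp]
  apply mul_le_mul_of_nonneg_right _ (Real.exp_nonneg _)
  have h1 : (√(2 * π * (v:ℝ)))⁻¹ ≤ (√(v:ℝ))⁻¹ := by
    apply inv_anti₀ (Real.sqrt_pos.2 hv0)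
    apply Real.sqrt_le_sqrt
    nlinarith [pi_gt_three]
  have h2 : (v:ℝ)/a ≤ v := by
    rw [div_le_iff₀ ha0]; nlinarith
  calc (√(2 * π * (v:ℝ)))⁻¹ * ((v:ℝ)/a) ≤ (√(v:ℝ))⁻¹ * v := by
        apply mul_le_mul h1 h2 (by positivity) (by positivity)
    _ = √(v:ℝ) := by
        rw [inv_mul_eq_div, div_eq_iff (Real.sqrt_pos.2 hv0).ne']
        exact (Real.mul_self_sqrt hv0.le).symm

lemma tail_lb {v : ℝ≥0} (hv : v ≠ 0) {a : ℝ} (ha : 0 ≤ a) :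
    (√(2 * π * (v:ℝ)))⁻¹ * Real.exp (-(a+1)^2/(2*v)) ≤ ((gaussianReal 0 v) (Ici a)).toReal := by
  have hv0 : (0:ℝ) < v := lt_of_le_of_ne v.coe_nonneg (by exact_mod_cast hv.symm)
  rw [tail_toReal hv]
  have h1 : ∫ x in Icc a (a+1), gaussianPDFReal 0 v x ≤ ∫ x in Ici a, gaussianPDFReal 0 v x := by
    apply setIntegral_mono_set (integrable_gaussianPDFReal 0 v).integrableOn
      (ae_of_all _ fun x => gaussianPDFReal_nonneg 0 v x)
    exact HasSubset.Subset.eventuallyLE (Icc_subset_Ici_self)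
  refine le_trans ?_ h1
  have h2 : ∫ x in Icc a (a+1), ((√(2 * π * (v:ℝ)))⁻¹ * Real.exp (-(a+1)^2/(2*v)))
      ≤ ∫ x in Icc a (a+1), gaussianPDFReal 0 v x := by
    apply setIntegral_mono_on (integrableOn_const (by simp) enorm_ne_top)
      (integrable_gaussianPDFReal 0 v).integrableOn measurableSet_Icc
    intro x hx
    rw [gaussianPDFReal, sub_zero]
    apply mul_le_mul_of_nonneg_left _ (by positivity)
    apply Real.exp_le_exp.2
    rw [div_le_div_iff_of_pos_right (by positivity)]
    nlinarith [hx.1, hx.2]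
  refine le_trans (le_of_eq ?_) h2
  rw [setIntegral_const]
  simp [Real.volume_Icc]

lemma lim_aux (σ T k d : ℝ) (hσ : 0 < σ) (hT : 0 < T) :
    Filter.Tendsto (fun x : ℝ => (k - ((Real.log x + d)/σ)^2/(2*T))/(Real.log x)^2)
      Filter.atTop (nhds (-1/(2*σ^2*T))) := by
  have hL : Filter.Tendsto (fun L : ℝ => (k - ((L + d)/σ)^2/(2*T))/L^2)
      Filter.atTop (nhds (-1/(2*σ^2*T))) := by
    have hk : Filter.Tendsto (fun L : ℝ => k/L^2) Filter.atTop (nhds 0) :=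
      Filter.Tendsto.div_atTop tendsto_const_nhds (Filter.tendsto_pow_atTop two_ne_zero)
    have hd : Filter.Tendsto (fun L : ℝ => 1 + d/L) Filter.atTop (nhds 1) := by
      have : Filter.Tendsto (fun L : ℝ => d/L) Filter.atTop (nhds 0) :=
        Filter.Tendsto.div_atTop tendsto_const_nhds Filter.tendsto_id
      simpa using tendsto_const_nhds.add this
    have h2 : Filter.Tendsto (fun L : ℝ => k/L^2 - (1 + d/L)^2/(2*σ^2*T))
        Filter.atTop (nhds (0 - 1^2/(2*σ^2*T))) :=
      hk.sub ((hd.pow 2).div_const _)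
    have h3 : (0 : ℝ) - 1^2/(2*σ^2*T) = -1/(2*σ^2*T) := by ring
    rw [h3] at h2
    apply h2.congr'
    filter_upwards [Filter.eventually_ge_atTop (1:ℝ)] with L hL1
    have hL0 : L ≠ 0 := by linarith
    field_simp
  have := hL.comp Real.tendsto_log_atTop
  exact this

lemma prob_tail {Ω : Type*} [MeasureSpace Ω] [IsProbabilityMeasure (ℙ : Measure Ω)]
    (W : ℝ → Ω → ℝ) (hW0 : ∀ ω, W 0 ω = 0) (hWm : ∀ t, Measurable (W t))
    (hWi : ∀ s t : ℝ, 0 ≤ s → s ≤ t →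
      Measure.map (fun ω => W t ω - W s ω) ℙ = gaussianReal 0 (Real.toNNReal (t - s)))
    {t : ℝ} (ht : 0 ≤ t) (a : ℝ) :
    ℙ {ω | a ≤ W t ω} = gaussianReal 0 t.toNNReal (Ici a) := by
  have h0 : (fun ω => W t ω - W 0 ω) = W t := funext fun ω => by rw [hW0 ω, sub_zero]
  have hmap : Measure.map (W t) ℙ = gaussianReal 0 t.toNNReal := by
    have h := hWi 0 t le_rfl ht
    rwa [h0, sub_zero] at h
  rw [← hmap, Measure.map_apply (hWm t) measurableSet_Ici]
  rfl


/-- Right-tail asymptotics of the finite sum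
`X_n = ∑_{i=1}^{n} exp(σ W_{t_i} + (m-σ²/2)t_i)`:
`lim_{x→∞} log P(X_n ≥ x) / (log x)² = -1/(2σ²τn)`. -/
theorem stmt18 {Ω : Type*} [MeasureSpace Ω] [IsProbabilityMeasure (ℙ : Measure Ω)]
    (W : ℝ → Ω → ℝ) (hW : IsStdBrownianMotion W)
    (σ τ m : ℝ) (hσ : 0 < σ) (hτ : 0 < τ) (n : ℕ) (hn : 1 ≤ n) :
    Filter.Tendsto
      (fun x : ℝ =>
        Real.log (ℙ {ω | x ≤ ∑ i ∈ Finset.range n,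
          Real.exp (σ * W (((i : ℝ) + 1) * τ) ω
            + (m - σ ^ 2 / 2) * (((i : ℝ) + 1) * τ))}).toReal / (Real.log x) ^ 2)
      Filter.atTop (nhds (-1 / (2 * σ ^ 2 * τ * n))) := by
  classical
  obtain ⟨hW0, _hWc, hWm, hWi, _hWind⟩ := hW
  have hn0 : (0:ℝ) < n := by exact_mod_cast Nat.lt_of_lt_of_le Nat.zero_lt_one hn
  set c : ℝ := m - σ^2/2 with hcdef
  set T : ℝ := (n:ℝ) * τ with hTdef
  have hT : 0 < T := mul_pos hn0 hτ
  have hTnn : ((Real.toNNReal T : ℝ≥0) : ℝ) = T := Real.coe_toNNReal T hT.le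
  have hvT : Real.toNNReal T ≠ 0 := fun h => absurd (Real.toNNReal_eq_zero.1 h) (not_le.2 hT)
  set k₁ : ℝ := Real.log ((√(2*π*T))⁻¹) with hk₁
  set d₁ : ℝ := σ - c*T with hd₁
  set k₂ : ℝ := Real.log ((n:ℝ) * Real.sqrt T) with hk₂
  set d₂ : ℝ := -(Real.log n + |c| * T) with hd₂
  have htarget : (-1 / (2 * σ ^ 2 * τ * (n:ℝ))) = -1/(2*σ^2*T) := by rw [hTdef]; ring
  rw [htarget]
  set R : ℝ := max (σ + Real.log n + |c| * T) (max (c*T) 1) with hR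
  have hR1 : (1:ℝ) ≤ R := le_max_of_le_right (le_max_right _ _)
  have main : ∀ᶠ x : ℝ in Filter.atTop,
      ((k₁ - ((Real.log x + d₁)/σ)^2/(2*T))/(Real.log x)^2
        ≤ Real.log (ℙ {ω | x ≤ ∑ i ∈ Finset.range n,
            Real.exp (σ * W (((i : ℝ) + 1) * τ) ω + c * (((i : ℝ) + 1) * τ))}).toReal
            / (Real.log x) ^ 2
      ∧ Real.log (ℙ {ω | x ≤ ∑ i ∈ Finset.range n,
            Real.exp (σ * W (((i : ℝ) + 1) * τ) ω + c * (((i : ℝ) + 1) * τ))}).toReal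
            / (Real.log x) ^ 2
        ≤ (k₂ - ((Real.log x + d₂)/σ)^2/(2*T))/(Real.log x)^2) := by
    filter_upwards [Real.tendsto_log_atTop.eventually_ge_atTop R,
      Filter.eventually_gt_atTop (1:ℝ)] with x hRx hx1
    have hx0 : (0:ℝ) < x := lt_trans one_pos hx1
    have hlx : (1:ℝ) ≤ Real.log x := hR1.trans hRx
    have hlx2 : (0:ℝ) < (Real.log x)^2 := by positivity
    set S := {ω : Ω | x ≤ ∑ i ∈ Finset.range n,
      Real.exp (σ * W (((i : ℝ) + 1) * τ) ω + c * (((i : ℝ) + 1) * τ))} with hS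
    -- Lower bound
    set aL : ℝ := (Real.log x - c*T)/σ with haL
    have hcTR : c*T ≤ R := le_max_of_le_right (le_max_left _ _)
    have haL0 : 0 ≤ aL := div_nonneg (by linarith) hσ.le
    have hsub : {ω | aL ≤ W T ω} ⊆ S := by
      intro ω hω
      simp only [Set.mem_setOf_eq] at hω ⊢
      have h1 : x ≤ Real.exp (σ * W T ω + c * T) := by
        rw [← Real.exp_log hx0]
        apply Real.exp_le_exp.2
        have h2 : σ * aL = Real.log x - c*T := by
          rw [haL]; field_simp
        nlinarith [mul_le_mul_of_nonneg_left hω hσ.le]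
      refine le_trans h1 ?_
      have hmem : n - 1 ∈ Finset.range n := Finset.mem_range.2 (by omega)
      have hterm := Finset.single_le_sum
        (f := fun i : ℕ => Real.exp (σ * W (((i:ℝ)+1)*τ) ω + c*(((i:ℝ)+1)*τ)))
        (fun i _ => (Real.exp_pos _).le) hmem
      have hcast : ((n-1 : ℕ):ℝ) + 1 = (n:ℝ) := by
        rw [Nat.cast_sub hn]; push_cast; ring
      simp only [hcast] at hterm
      rw [← hTdef] at hterm
      exact hterm
    have hlow : (√(2*π*T))⁻¹ * Real.exp (-(aL+1)^2/(2*T))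
        ≤ (ℙ S).toReal := by
      have h := tail_lb (v := Real.toNNReal T) hvT haL0
      rw [hTnn] at h
      refine h.trans ?_
      rw [← prob_tail W hW0 hWm hWi hT.le aL]
      exact ENNReal.toReal_mono (measure_ne_top _ _) (measure_mono hsub)
    have hP0 : 0 < (ℙ S).toReal := lt_of_lt_of_le (by positivity) hlow
    constructor
    · rw [div_le_div_iff_of_pos_right hlx2]
      have hform : aL + 1 = (Real.log x + d₁)/σ := by
        rw [haL, hd₁]; field_simp; ring
      calc k₁ - ((Real.log x + d₁)/σ)^2/(2*T)
          = Real.log ((√(2*π*T))⁻¹ * Real.exp (-(aL+1)^2/(2*T))) := by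
            rw [Real.log_mul (by positivity) (Real.exp_ne_zero _), Real.log_exp, hform, hk₁]
            ring
        _ ≤ Real.log (ℙ S).toReal := Real.log_le_log (by positivity) hlow
    · -- Upper bound
      have hB1 : 1 ≤ (Real.log x + d₂)/σ := by
        rw [le_div_iff₀ hσ, one_mul, hd₂]
        have : σ + Real.log n + |c| * T ≤ R := le_max_left _ _
        linarith
      have hB0 : 0 ≤ (Real.log x + d₂)/σ := le_trans zero_le_one hB1
      set B : ℝ := (Real.log x + d₂)/σ with hBdef
      have hsubU : S ⊆ ⋃ i ∈ Finset.range n,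
          {ω | (Real.log (x/(n:ℝ)) - c*(((i:ℝ)+1)*τ))/σ ≤ W (((i:ℝ)+1)*τ) ω} := by
        intro ω hω
        simp only [hS, Set.mem_setOf_eq] at hω
        by_contra hcon
        simp only [Set.mem_iUnion, Set.mem_setOf_eq, not_exists, not_le] at hcon
        have hxn : (0:ℝ) < x/(n:ℝ) := by positivity
        have hsum : ∑ i ∈ Finset.range n,
            Real.exp (σ * W (((i:ℝ)+1)*τ) ω + c*(((i:ℝ)+1)*τ))
            < ∑ _i ∈ Finset.range n, x/(n:ℝ) := by
          apply Finset.sum_lt_sum_of_nonempty ⟨0, Finset.mem_range.2 (by omega)⟩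
          intro i hi
          have hib := hcon i hi
          rw [lt_div_iff₀ hσ] at hib
          have h5 : σ * W (((i:ℝ)+1)*τ) ω + c*(((i:ℝ)+1)*τ) < Real.log (x/(n:ℝ)) := by
            nlinarith
          calc Real.exp (σ * W (((i:ℝ)+1)*τ) ω + c*(((i:ℝ)+1)*τ))
              < Real.exp (Real.log (x/(n:ℝ))) := Real.exp_lt_exp.2 h5
            _ = x/(n:ℝ) := Real.exp_log hxn
        rw [Finset.sum_const, Finset.card_range, nsmul_eq_mul] at hsum
        rw [mul_div_cancel₀ x (ne_of_gt hn0)] at hsum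
        linarith
      have hPU : (ℙ S).toReal ≤ (n:ℝ) * (Real.sqrt T * Real.exp (-B^2/(2*T))) := by
        have h1 : ℙ S ≤ ∑ i ∈ Finset.range n, ℙ {ω | (Real.log (x/(n:ℝ)) - c*(((i:ℝ)+1)*τ))/σ ≤ W (((i:ℝ)+1)*τ) ω} :=
          (measure_mono hsubU).trans (measure_biUnion_finset_le _ _)
        have h2 : (ℙ S).toReal ≤ ∑ i ∈ Finset.range n,
            (ℙ {ω | (Real.log (x/(n:ℝ)) - c*(((i:ℝ)+1)*τ))/σ ≤ W (((i:ℝ)+1)*τ) ω}).toReal := by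
          rw [← ENNReal.toReal_sum (fun i _ => measure_ne_top _ _)]
          exact ENNReal.toReal_mono (ENNReal.sum_ne_top.2 fun i _ => measure_ne_top _ _) h1
        refine h2.trans ?_
        have h3 : ∀ i ∈ Finset.range n,
            (ℙ {ω | (Real.log (x/(n:ℝ)) - c*(((i:ℝ)+1)*τ))/σ ≤ W (((i:ℝ)+1)*τ) ω}).toReal
            ≤ Real.sqrt T * Real.exp (-B^2/(2*T)) := by
          intro i hi
          have hti : (0:ℝ) < ((i:ℝ)+1)*τ := by positivity
          have hiT : ((i:ℝ)+1)*τ ≤ T := by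
            rw [hTdef]
            apply mul_le_mul_of_nonneg_right _ hτ.le
            have : (i:ℝ) + 1 ≤ (n:ℝ) := by
              have := Finset.mem_range.1 hi
              exact_mod_cast Nat.succ_le_of_lt this
            exact this
          have hvti : Real.toNNReal (((i:ℝ)+1)*τ) ≠ 0 :=
            fun h => absurd (Real.toNNReal_eq_zero.1 h) (not_le.2 hti)
          have hlogxn : Real.log (x/(n:ℝ)) = Real.log x - Real.log n :=
            Real.log_div (ne_of_gt hx0) (ne_of_gt hn0)
          have hbB : B ≤ (Real.log (x/(n:ℝ)) - c*(((i:ℝ)+1)*τ))/σ := by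
            rw [hBdef, div_le_div_iff_of_pos_right hσ, hlogxn, hd₂]
            have hct : c*(((i:ℝ)+1)*τ) ≤ |c| * T := by
              calc c*(((i:ℝ)+1)*τ) ≤ |c| * (((i:ℝ)+1)*τ) :=
                    mul_le_mul_of_nonneg_right (le_abs_self c) hti.le
                _ ≤ |c| * T := mul_le_mul_of_nonneg_left hiT (abs_nonneg c)
            linarith
          have hb1 : 1 ≤ (Real.log (x/(n:ℝ)) - c*(((i:ℝ)+1)*τ))/σ := hB1.trans hbB
          rw [prob_tail W hW0 hWm hWi hti.le]
          have h4 := tail_ub (v := Real.toNNReal (((i:ℝ)+1)*τ)) hvti hb1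
          rw [Real.coe_toNNReal _ hti.le] at h4
          refine h4.trans ?_
          apply mul_le_mul (Real.sqrt_le_sqrt hiT) _ (Real.exp_nonneg _) (Real.sqrt_nonneg _)
          apply Real.exp_le_exp.2
          rw [neg_div, neg_div, neg_le_neg_iff]
          calc B^2/(2*T) ≤ ((Real.log (x/(n:ℝ)) - c*(((i:ℝ)+1)*τ))/σ)^2/(2*T) := by
                apply div_le_div_of_nonneg_right ?_ (by positivity)
                nlinarith
            _ ≤ ((Real.log (x/(n:ℝ)) - c*(((i:ℝ)+1)*τ))/σ)^2/(2*(((i:ℝ)+1)*τ)) := by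
                apply div_le_div_of_nonneg_left (sq_nonneg _) (by positivity)
                linarith
        calc ∑ i ∈ Finset.range n,
            (ℙ {ω | (Real.log (x/(n:ℝ)) - c*(((i:ℝ)+1)*τ))/σ ≤ W (((i:ℝ)+1)*τ) ω}).toReal
            ≤ ∑ _i ∈ Finset.range n, Real.sqrt T * Real.exp (-B^2/(2*T)) :=
              Finset.sum_le_sum h3
          _ = (n:ℝ) * (Real.sqrt T * Real.exp (-B^2/(2*T))) := by
              rw [Finset.sum_const, Finset.card_range, nsmul_eq_mul]
      rw [div_le_div_iff_of_pos_right hlx2]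
      calc Real.log (ℙ S).toReal
          ≤ Real.log ((n:ℝ) * (Real.sqrt T * Real.exp (-B^2/(2*T)))) :=
            Real.log_le_log hP0 hPU
        _ = k₂ - ((Real.log x + d₂)/σ)^2/(2*T) := by
            rw [← mul_assoc, Real.log_mul (by positivity) (Real.exp_ne_zero _),
              Real.log_exp, hk₂, ← hBdef]
            ring
  exact tendsto_of_tendsto_of_tendsto_of_le_of_le' (lim_aux σ T k₁ d₁ hσ hT)
    (lim_aux σ T k₂ d₂ hσ hT) (main.mono fun x h => h.1) (main.mono fun x h => h.2)
end
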